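/- arXiv:2509.06345 — 4 statements merged into one kernel-verified Lean document; each statement's English description precedes it below -/
import Mathlib

section
/- Let G be a 2-connected graph with a longest cycle L, and let B_1, …, B_k be pairwise vertex-disjoint L-bridges of G. For each i, let T_i be a tree contained in B_i with the maximum number of edges whose leaves are exactly the attachments of B_i (so λ(B_i) = |E(T_i)|), and let H be the union of L and T_1, …, T_k. Suppose there exists a collection 𝒞 of cycles of H such that each edge of L lies in exactly two cycles of 𝒞, each edge of H not in L lies in at least four cycles of 𝒞, and for every C ∈ 𝒞, L△C is a cycle. Then λ(B_1) + ⋯ + λ(B_k) ≤ ⌊|E(L)|/2⌋. -/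
open SimpleGraph

variable {V : Type*}

/-- A subgraph is a cycle if it is the subgraph associated to some cycle walk. -/
def IsCycleSubgraph (G : SimpleGraph V) (L : G.Subgraph) : Prop :=
  ∃ (v : V) (w : G.Walk v v), w.IsCycle ∧ L = w.toSubgraph

/-- A longest cycle: a cycle with the maximum number of edges among all cycles. -/
def IsLongestCycle (G : SimpleGraph V) (L : G.Subgraph) : Prop :=
  IsCycleSubgraph G L ∧
    ∀ C : G.Subgraph, IsCycleSubgraph G C → C.edgeSet.ncard ≤ L.edgeSet.ncard

/-- A graph is `2`-connected if it has at least `3` vertices and deleting any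
single vertex leaves a connected graph. -/
def TwoConnected (G : SimpleGraph V) : Prop :=
  3 ≤ Nat.card V ∧ ∀ v : V, ((⊤ : G.Subgraph).deleteVerts {v}).coe.Connected

/-- `B` is an `H`-bridge of `G`: either a single edge of `G` not in `H` with both endpoints
in `V(H)`, or a component `D` of `G - V(H)` together with all edges between `D` and `V(H)`. -/
def IsBridge (G : SimpleGraph V) (H B : G.Subgraph) : Prop :=
  (∃ (u v : V) (huv : G.Adj u v), ¬H.Adj u v ∧ u ∈ H.verts ∧ v ∈ H.verts ∧
    B = G.subgraphOfAdj huv) ∨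
  (∃ D : Set V, D.Nonempty ∧ (∀ d ∈ D, d ∉ H.verts) ∧
    (G.induce D).Connected ∧
    (∀ u ∈ D, ∀ v : V, v ∉ D → v ∉ H.verts → ¬G.Adj u v) ∧
    B.verts = D ∪ {v ∈ H.verts | ∃ u ∈ D, G.Adj u v} ∧
    (∀ x y : V, B.Adj x y ↔ G.Adj x y ∧ (x ∈ D ∨ y ∈ D)))

/-- The attachments of an `H`-bridge `B`. -/
def attachments {G : SimpleGraph V} (H B : G.Subgraph) : Set V :=
  H.verts ∩ B.verts

/-- A subgraph is a path if it is the subgraph associated to some path walk. -/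
def IsPathSubgraph (G : SimpleGraph V) (P : G.Subgraph) : Prop :=
  ∃ (u v : V) (w : G.Walk u v), w.IsPath ∧ P = w.toSubgraph

/-- Two `L`-bridges overlap if `L` cannot be partitioned into two subpaths `L₁`, `L₂`
such that the attachments of `Bᵢ` all lie on `Lᵢ`. -/
def Overlap (G : SimpleGraph V) (L B₁ B₂ : G.Subgraph) : Prop :=
  ¬∃ L₁ L₂ : G.Subgraph, IsPathSubgraph G L₁ ∧ IsPathSubgraph G L₂ ∧
    L₁ ⊔ L₂ = L ∧ L₁.edgeSet ∩ L₂.edgeSet = ∅ ∧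
    attachments L B₁ ⊆ L₁.verts ∧ attachments L B₂ ⊆ L₂.verts

/-- The graph induced on the bridges `B 0, …, B (k-1)` by the overlap relation. -/
def OverlapGraph (G : SimpleGraph V) (L : G.Subgraph) {k : ℕ}
    (B : Fin k → G.Subgraph) : SimpleGraph (Fin k) :=
  SimpleGraph.fromRel fun i j => Overlap G L (B i) (B j)

/-- The leaves of a subgraph: vertices with exactly one neighbour in it. -/
def subLeaves {G : SimpleGraph V} (T : G.Subgraph) : Set V :=
  {v ∈ T.verts | (T.neighborSet v).ncard = 1}

/-- The length `λ(B)` of an `L`-bridge `B`: the maximum number of edges of a tree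
contained in `B` whose leaves are exactly the attachments of `B`. -/
noncomputable def bridgeLength {G : SimpleGraph V} (L B : G.Subgraph) : ℕ :=
  sSup {n | ∃ T : G.Subgraph, T ≤ B ∧ T.coe.IsTree ∧
    subLeaves T = attachments L B ∧ T.edgeSet.ncard = n}

/-- The symmetric difference of two subgraphs: the subgraph induced by the symmetric
difference of the edge sets. -/
def symmDiffSub {G : SimpleGraph V} (H₁ H₂ : G.Subgraph) : G.Subgraph where
  verts := {v | ∃ w, (H₁.Adj v w ∧ ¬H₂.Adj v w) ∨ (H₂.Adj v w ∧ ¬H₁.Adj v w)}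
  Adj v w := (H₁.Adj v w ∧ ¬H₂.Adj v w) ∨ (H₂.Adj v w ∧ ¬H₁.Adj v w)
  adj_sub h := h.elim (fun h' => h'.1.adj_sub) (fun h' => h'.1.adj_sub)
  edge_vert h := ⟨_, h⟩
  symm := ⟨fun v w h => by
    rcases h with ⟨h1, h2⟩ | ⟨h1, h2⟩
    · exact Or.inl ⟨h1.symm, fun hc => h2 hc.symm⟩
    · exact Or.inr ⟨h1.symm, fun hc => h2 hc.symm⟩⟩

/-- `x` lies on the directed segment from `u` to `v` along the arc relation `A`. -/
def InSeg (A : V → V → Prop) (u v x : V) : Prop :=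
  ∃ (m : ℕ) (f : Fin (m + 1) → V), f 0 = u ∧ f (Fin.last m) = v ∧
    (∀ i : Fin m, A (f i.castSucc) (f i.succ)) ∧ ∃ i, f i = x

/-- A directed cycle of `G`: a cycle subgraph together with an orientation of its
edges in which every vertex has exactly one out-neighbour. -/
structure DiCycle (G : SimpleGraph V) where
  C : G.Subgraph
  isCycle : IsCycleSubgraph G C
  Arc : V → V → Prop
  arc_iff : ∀ x y, C.Adj x y ↔ (Arc x y ∨ Arc y x)
  arc_asymm : ∀ x y, Arc x y → ¬Arc y x
  out_unique : ∀ x ∈ C.verts, ∃! y, Arc x y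

/-- `A` is an orientation of the cycle `L` as a directed cycle (e.g. "clockwise"). -/
def IsOrientation {G : SimpleGraph V} (L : G.Subgraph) (A : V → V → Prop) : Prop :=
  (∀ x y, L.Adj x y ↔ (A x y ∨ A y x)) ∧ (∀ x y, A x y → ¬A y x) ∧
  (∀ x ∈ L.verts, ∃! y, A x y) ∧ (∀ x ∈ L.verts, ∃! y, A y x)

/-- The directed cycle `D` is of type `ij` with respect to `a` (with `i j : Bool`,
`i = true` meaning the cycle uses `a⁻` rather than `a⁺`, and `j = true` meaning it
contains the arc `(a,b)` rather than `(b,a)` for the edge `ab` leaving `L`),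
relative to the clockwise orientation `A` of `L`. -/
def DiType {G : SimpleGraph V} (L : G.Subgraph) (A : V → V → Prop)
    (D : DiCycle G) (i j : Bool) (a : V) : Prop :=
  (∃ b, b ∉ L.verts ∧ (if j then D.Arc a b else D.Arc b a)) ∧
  (∃ c, (if i then A c a else A a c) ∧ (if j then D.Arc c a else D.Arc a c))

/-- Conditions (C1)–(C4): a feasible family of directed cycles for `(G, L)`,
relative to the clockwise orientation `A` of `L`. -/
def Feasible (G : SimpleGraph V) (L : G.Subgraph) (A : V → V → Prop)
    (𝒞 : Set (DiCycle G)) : Prop :=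
  (∀ e ∈ L.edgeSet, {D ∈ 𝒞 | e ∈ D.C.edgeSet}.ncard = 2) ∧
  (∀ e ∈ G.edgeSet, e ∉ L.edgeSet → 4 ≤ {D ∈ 𝒞 | e ∈ D.C.edgeSet}.ncard) ∧
  (∀ D ∈ 𝒞, IsCycleSubgraph G (symmDiffSub L D.C)) ∧
  (∀ D ∈ 𝒞, ∀ B : G.Subgraph, IsBridge G L B →
    (D.C.verts ∩ attachments L B).ncard = 0 ∨ (D.C.verts ∩ attachments L B).ncard = 2) ∧
  (∀ (i j : Bool) (x : V), (∃ B : G.Subgraph, IsBridge G L B ∧ x ∈ attachments L B) →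
    ∃! D : DiCycle G, D ∈ 𝒞 ∧ DiType L A D i j x)

lemma symmDiffSub_edgeSet {G : SimpleGraph V} (H₁ H₂ : G.Subgraph) :
    (symmDiffSub H₁ H₂).edgeSet = (H₁.edgeSet \ H₂.edgeSet) ∪ (H₂.edgeSet \ H₁.edgeSet) := by
  ext e
  induction e using Sym2.ind with
  | _ x y =>
    simp only [Subgraph.mem_edgeSet, Set.mem_union, Set.mem_diff]
    exact Iff.rfl

lemma bridge_edge_not_mem {G : SimpleGraph V} {L B : G.Subgraph}
    (hB : IsBridge G L B) {e : Sym2 V} (he : e ∈ B.edgeSet) : e ∉ L.edgeSet := by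
  induction e using Sym2.ind with
  | _ x y =>
    rw [Subgraph.mem_edgeSet] at he ⊢
    intro hL
    rcases hB with ⟨u, v, huv, hnadj, _, _, rfl⟩ | ⟨D, _, hDL, _, _, _, hBadj⟩
    · rw [subgraphOfAdj_adj, Sym2.eq_iff] at he
      rcases he with ⟨rfl, rfl⟩ | ⟨rfl, rfl⟩
      · exact hnadj hL
      · exact hnadj hL.symm
    · rcases (hBadj x y).mp he with ⟨_, hx | hy⟩
      · exact hDL x hx hL.fst_mem
      · exact hDL y hy hL.snd_mem

lemma bridgeLength_eq {G : SimpleGraph V} {L Bi Ti : G.Subgraph}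
    (h1 : Ti ≤ Bi) (h2 : Ti.coe.IsTree) (h3 : subLeaves Ti = attachments L Bi)
    (hmax : ∀ T' : G.Subgraph, T' ≤ Bi → T'.coe.IsTree →
      subLeaves T' = attachments L Bi → T'.edgeSet.ncard ≤ Ti.edgeSet.ncard) :
    bridgeLength L Bi = Ti.edgeSet.ncard := by
  have hmem : Ti.edgeSet.ncard ∈ {n | ∃ T : G.Subgraph, T ≤ Bi ∧ T.coe.IsTree ∧
      subLeaves T = attachments L Bi ∧ T.edgeSet.ncard = n} := ⟨Ti, h1, h2, h3, rfl⟩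
  have hub : Ti.edgeSet.ncard ∈ upperBounds {n | ∃ T : G.Subgraph, T ≤ Bi ∧ T.coe.IsTree ∧
      subLeaves T = attachments L Bi ∧ T.edgeSet.ncard = n} := by
    rintro n ⟨T', hT1, hT2, hT3, rfl⟩
    exact hmax T' hT1 hT2 hT3
  exact le_antisymm (csSup_le ⟨_, hmem⟩ fun n hn => hub hn) (le_csSup ⟨_, hub⟩ hmem)

/-- The reduction step: if `L` is a longest cycle of a `2`-connected graph `G`,
`B 1, …, B k` are pairwise vertex-disjoint `L`-bridges, `T i ≤ B i` is a tree with the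
maximum number of edges whose leaves are exactly the attachments of `B i`, and the union
`H` of `L` and the `T i` admits a collection of cycles covering each edge of `L` exactly
twice, every other edge of `H` at least four times, with all symmetric differences with
`L` being cycles, then `∑ λ(Bᵢ) ≤ ⌊|E(L)|/2⌋`. -/
theorem reduction_to_covering (G : SimpleGraph V) (L : G.Subgraph)
    (hG : TwoConnected G) (hL : IsLongestCycle G L)
    {k : ℕ} (hk : 0 < k) (B T : Fin k → G.Subgraph)
    (hbridge : ∀ i, IsBridge G L (B i))
    (hdisj : ∀ i j, i ≠ j → (B i).verts ∩ (B j).verts = ∅)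
    (hTsub : ∀ i, T i ≤ B i)
    (hTtree : ∀ i, (T i).coe.IsTree)
    (hTleaves : ∀ i, subLeaves (T i) = attachments L (B i))
    (hTmax : ∀ i, ∀ T' : G.Subgraph, T' ≤ B i → T'.coe.IsTree →
      subLeaves T' = attachments L (B i) → T'.edgeSet.ncard ≤ (T i).edgeSet.ncard)
    (m : ℕ) (𝒞 : Fin m → G.Subgraph)
    (hcyc : ∀ j, IsCycleSubgraph G (𝒞 j) ∧ 𝒞 j ≤ L ⊔ ⨆ i, T i)
    (htwo : ∀ e ∈ L.edgeSet, {j : Fin m | e ∈ (𝒞 j).edgeSet}.ncard = 2)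
    (hfour : ∀ e ∈ (L ⊔ ⨆ i, T i).edgeSet, e ∉ L.edgeSet →
      4 ≤ {j : Fin m | e ∈ (𝒞 j).edgeSet}.ncard)
    (hsd : ∀ j, IsCycleSubgraph G (symmDiffSub L (𝒞 j))) :
    ∑ i, bridgeLength L (B i) ≤ L.edgeSet.ncard / 2 := by
  classical
  obtain ⟨hLcyc, hLmax⟩ := hL
  -- finiteness of the relevant edge sets
  have hfin : ∀ M : G.Subgraph, IsCycleSubgraph G M → M.edgeSet.Finite := by
    rintro M ⟨v, w, hw, rfl⟩
    rw [SimpleGraph.Walk.edgeSet_toSubgraph]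
    exact w.edges.finite_toSet
  have hLfin : L.edgeSet.Finite := hfin L hLcyc
  have hEfin : ∀ j, ((𝒞 j).edgeSet).Finite := fun j => hfin _ (hcyc j).1
  set F : Finset (Sym2 V) := hLfin.toFinset with hF
  set E : Fin m → Finset (Sym2 V) := fun j => (hEfin j).toFinset with hE
  have hFmem : ∀ e, e ∈ F ↔ e ∈ L.edgeSet := fun e => hLfin.mem_toFinset
  have hEmem : ∀ j e, e ∈ E j ↔ e ∈ (𝒞 j).edgeSet := fun j e => (hEfin j).mem_toFinset
  have hFcard : L.edgeSet.ncard = F.card := Set.ncard_eq_toFinset_card L.edgeSet hLfin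
  -- replace bridge lengths by the tree edge counts
  have hbl : ∀ i, bridgeLength L (B i) = (T i).edgeSet.ncard := fun i =>
    bridgeLength_eq (hTsub i) (hTtree i) (hTleaves i) (hTmax i)
  -- finite truncations of the tree edge sets
  set s : Fin k → Finset (Sym2 V) := fun i =>
    if h : (T i).edgeSet.Finite then h.toFinset else ∅ with hs
  have hscard : ∀ i, (T i).edgeSet.ncard = (s i).card := by
    intro i
    by_cases h : (T i).edgeSet.Finite
    · simp [hs, h, Set.ncard_eq_toFinset_card _ h]
    · simp [hs, h, Set.Infinite.ncard h]
  have hssub : ∀ i, ∀ e ∈ s i, e ∈ (T i).edgeSet := by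
    intro i e he
    by_cases h : (T i).edgeSet.Finite
    · simpa [hs, h] using he
    · simp [hs, h] at he
  have hsnotL : ∀ i, ∀ e ∈ s i, e ∉ L.edgeSet := fun i e he =>
    bridge_edge_not_mem (hbridge i) (Subgraph.edgeSet_mono (hTsub i) (hssub i e he))
  have hsH : ∀ i, ∀ e ∈ s i, e ∈ (L ⊔ ⨆ i, T i).edgeSet := fun i e he =>
    Subgraph.edgeSet_mono (le_trans (le_iSup T i) le_sup_right) (hssub i e he)
  -- the tree edge sets are pairwise disjoint
  have hsdisj : (↑(Finset.univ : Finset (Fin k)) : Set (Fin k)).PairwiseDisjoint s := by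
    intro i _ j _ hij
    rw [Function.onFun, Finset.disjoint_left]
    intro e hei hej
    have h1 := hssub i e hei
    have h2 := hssub j e hej
    induction e using Sym2.ind with
    | _ x y =>
      rw [Subgraph.mem_edgeSet] at h1 h2
      have hx : x ∈ (B i).verts := ((hTsub i).2 h1).fst_mem
      have hx' : x ∈ (B j).verts := ((hTsub j).2 h2).fst_mem
      have := hdisj i j hij
      have : x ∈ (B i).verts ∩ (B j).verts := ⟨hx, hx'⟩
      rw [hdisj i j hij] at this
      exact this
  -- counting function
  set cnt : Sym2 V → ℕ := fun e => (Finset.univ.filter fun j => e ∈ E j).card with hcnt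
  have hcnteq : ∀ e, {j : Fin m | e ∈ (𝒞 j).edgeSet}.ncard = cnt e := by
    intro e
    rw [Set.ncard_eq_toFinset_card']
    congr 1
    ext j
    simp [hEmem]
  -- Fubini: double counting over any finset of edges
  have fub : ∀ A : Finset (Sym2 V),
      ∑ j, (E j ∩ A).card = ∑ e ∈ A, cnt e := by
    intro A
    have h1 : ∀ j, (E j ∩ A).card = ∑ e ∈ A, if e ∈ E j then 1 else 0 := by
      intro j
      rw [Finset.inter_comm, ← Finset.filter_mem_eq_inter, Finset.card_filter]
    have h2 : ∀ e, cnt e = ∑ j, if e ∈ E j then 1 else 0 := by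
      intro e; rw [hcnt]; exact Finset.card_filter _ _
    simp only [h1, h2]
    exact Finset.sum_comm
  -- key inequality per cycle, from the longest-cycle property
  have key : ∀ j, (E j \ F).card ≤ (E j ∩ F).card := by
    intro j
    have h1 := hLmax _ (hsd j)
    rw [symmDiffSub_edgeSet] at h1
    have hset : (L.edgeSet \ (𝒞 j).edgeSet) ∪ ((𝒞 j).edgeSet \ L.edgeSet)
        = ↑((F \ E j) ∪ (E j \ F)) := by
      ext e
      simp [hFmem, hEmem]
    rw [hset, Set.ncard_coe_finset, hFcard,
      Finset.card_union_of_disjoint disjoint_sdiff_sdiff] at h1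
    have h2 : (F \ E j).card + (F ∩ E j).card = F.card :=
      Finset.card_sdiff_add_card_inter F (E j)
    have h3 : (F ∩ E j).card = (E j ∩ F).card := by rw [Finset.inter_comm]
    omega
  -- the union of the tree edges
  set S : Finset (Sym2 V) := Finset.univ.biUnion s with hS
  have hcard_S : ∑ i, (s i).card = S.card := (Finset.card_biUnion hsdisj).symm
  -- lower bound: each tree edge is covered at least 4 times
  have low : 4 * ∑ i, (s i).card ≤ ∑ j, (E j \ F).card := by
    calc 4 * ∑ i, (s i).card = ∑ i, ∑ e ∈ s i, 4 := by
          simp [Finset.sum_const, Finset.mul_sum, mul_comm]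
      _ ≤ ∑ i, ∑ e ∈ s i, cnt e := by
          apply Finset.sum_le_sum
          intro i _
          apply Finset.sum_le_sum
          intro e he
          rw [← hcnteq e]
          exact hfour e (hsH i e he) (hsnotL i e he)
      _ = ∑ e ∈ S, cnt e := (Finset.sum_biUnion hsdisj).symm
      _ = ∑ j, (E j ∩ S).card := (fub S).symm
      _ ≤ ∑ j, (E j \ F).card := by
          apply Finset.sum_le_sum
          intro j _
          apply Finset.card_le_card
          intro e he
          rw [Finset.mem_inter] at he
          rw [Finset.mem_sdiff]
          refine ⟨he.1, ?_⟩
          obtain ⟨i, _, hei⟩ := Finset.mem_biUnion.mp he.2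
          rw [hFmem]
          exact hsnotL i e hei
  -- upper bound: each edge of L is covered exactly twice
  have high : ∑ j, (E j ∩ F).card = 2 * F.card := by
    rw [fub F]
    have h2 : ∀ e ∈ F, cnt e = 2 := by
      intro e he
      rw [← hcnteq e]
      exact htwo e ((hFmem e).mp he)
    rw [Finset.sum_congr rfl h2, Finset.sum_const, smul_eq_mul, mul_comm]
  have main : 4 * ∑ i, (s i).card ≤ 2 * F.card := by
    calc 4 * ∑ i, (s i).card ≤ ∑ j, (E j \ F).card := low
      _ ≤ ∑ j, (E j ∩ F).card := Finset.sum_le_sum fun j _ => key j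
      _ = 2 * F.card := high
  have : ∑ i, bridgeLength L (B i) = ∑ i, (s i).card := by
    apply Finset.sum_congr rfl
    intro i _
    rw [hbl i, hscard i]
  rw [this, hFcard]
  omega
end

section
/- Let η = (p_1, …, p_k) be a k-partition of an integer n ≥ 2. For each arc (u,v) of the multidigraph D_η, there exist two directed cycles of D_η that both contain (u,v) and share no arc other than (u,v). -/
/-- The vertex set of the auxiliary multidigraph `D_η` associated to the
`k`-partition `η = (p 0, …, p (k-1))`: the vertices `v^i_j` for `1 ≤ i ≤ k`,
`1 ≤ j ≤ p i` (here `⟨i, j⟩` stands for `v^(i+1)_(j+1)`). -/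
def PartVert (k : ℕ) (p : Fin k → ℕ) : Type :=
  Σ i : Fin k, Fin (p i)

instance (k : ℕ) (p : Fin k → ℕ) : Fintype (PartVert k p) :=
  Sigma.instFintype

instance (k : ℕ) (p : Fin k → ℕ) : DecidableEq (PartVert k p) :=
  Sigma.instDecidableEqSigma

/-- The multiplicity of the arc `(a, b)` in the multidigraph `D_η`.
For `k = 1` the arcs are `(v^1_j, v^1_{j+1})` and `(v^1_{j+1}, v^1_j)` for
`j = 1, …, n` (indices of the second coordinate taken modulo `n = p 1`).
For `k ≥ 2` the arcs are `(v^i_j, v^i_{j+1})` and `(v^i_{j+1}, v^i_j)` for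
`1 ≤ i ≤ k`, `1 ≤ j ≤ p i - 1`, together with `(v^i_1, v^{i+1}_1)` and
`(v^i_{p i}, v^{i+1}_{p (i+1)})` for `1 ≤ i ≤ k` (upper indices modulo `k`). -/
def arcMult {k : ℕ} (p : Fin k → ℕ) (a b : PartVert k p) : ℕ :=
  if k = 1 then
    (if b.2.val = (a.2.val + 1) % p a.1 then 1 else 0) +
    (if a.2.val = (b.2.val + 1) % p b.1 then 1 else 0)
  else
    (if a.1 = b.1 ∧ (b.2.val = a.2.val + 1 ∨ a.2.val = b.2.val + 1) then 1 else 0) +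
    (if a.2.val = 0 ∧ b.2.val = 0 ∧ b.1.val = (a.1.val + 1) % k then 1 else 0) +
    (if a.2.val = p a.1 - 1 ∧ b.2.val = p b.1 - 1 ∧ b.1.val = (a.1.val + 1) % k
      then 1 else 0)


namespace DetaAux

lemma vert_ext {k : ℕ} {p : Fin k → ℕ} {a b : PartVert k p} (h1 : a.1 = b.1)
    (h2 : a.2.val = b.2.val) : a = b := by
  obtain ⟨i, r⟩ := a; obtain ⟨j, s⟩ := b
  cases h1
  exact congrArg (Sigma.mk i) (Fin.ext h2)

lemma val2_eq {k : ℕ} {p : Fin k → ℕ} {a b : PartVert k p} (h : a = b) :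
    a.1.val = b.1.val ∧ a.2.val = b.2.val := by subst h; exact ⟨rfl, rfl⟩

lemma mod_shift_inj {k x a b : ℕ} (ha : a < k) (hb : b < k)
    (h : (x + a) % k = (x + b) % k) : a = b :=
  (Nat.ModEq.add_left_cancel' x h).eq_of_lt_of_lt ha hb

lemma succ_mod_ne {N x : ℕ} (hN : 2 ≤ N) (hx : x < N) : (x + 1) % N ≠ x := by
  rcases Nat.lt_or_ge (x + 1) N with h | h
  · rw [Nat.mod_eq_of_lt h]; omega
  · have he : x + 1 = N := by omega
    rw [he, Nat.mod_self]; omega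

lemma mod_succ_ne {k : ℕ} (hk : 2 ≤ k) (x : ℕ) : (x + 1) % k ≠ x % k := by
  intro h
  have h2 : (x + 1) % k = (x + 0) % k := by simpa using h
  have := mod_shift_inj (a := 1) (b := 0) (by omega) (by omega) h2
  omega

/-- builder: package `f : ℕ → PartVert k p` into a cycle on `ZMod m`. -/
lemma build {k : ℕ} {p : Fin k → ℕ} {m : ℕ} (hm : 2 ≤ m) (f : ℕ → PartVert k p)
    (hper : f m = f 0)
    (hinj : ∀ s₁, s₁ < m → ∀ s₂, s₂ < m → f s₁ = f s₂ → s₁ = s₂)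
    (harc : ∀ s, s < m → 1 ≤ arcMult p (f s) (f (s + 1))) :
    ∃ c : ZMod m → PartVert k p,
      Function.Injective c ∧
      (∀ t, 1 ≤ arcMult p (c t) (c (t + 1))) ∧
      (∀ s, s < m → c s = f s ∧ c ((s : ZMod m) + 1) = f (s + 1)) ∧
      (∀ a b : PartVert k p, (∃ t : ZMod m, c t = a ∧ c (t + 1) = b) →
        ∃ s, s < m ∧ f s = a ∧ f (s + 1) = b) := by
  haveI : NeZero m := ⟨by omega⟩
  refine ⟨fun t => f t.val, ?_, ?_, ?_, ?_⟩ <;>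
    [skip; skip; skip; skip]
  case _ =>
    intro t₁ t₂ h
    exact ZMod.val_injective _ (hinj _ (ZMod.val_lt t₁) _ (ZMod.val_lt t₂) h)
  all_goals
    have key : ∀ t : ZMod m, f ((t + 1).val) = f (t.val + 1) := by
      intro t
      have h1 : (t + 1).val = (t.val + 1) % m := by
        rw [ZMod.val_add, ZMod.val_one_eq_one_mod, Nat.add_mod_mod]
      have hlt := ZMod.val_lt t
      rcases Nat.lt_or_ge (t.val + 1) m with h | h
      · rw [h1, Nat.mod_eq_of_lt h]
      · have he : t.val + 1 = m := by omega
        rw [h1, he, Nat.mod_self]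
        exact hper.symm
  case _ =>
    intro t
    have := harc t.val (ZMod.val_lt t)
    simpa [key t] using this
  case _ =>
    intro s hs
    have hv : ((s : ZMod m)).val = s := ZMod.val_natCast_of_lt hs
    constructor
    · show f ((s : ZMod m)).val = f s; rw [hv]
    · show f (((s : ZMod m) + 1)).val = f (s + 1); rw [key, hv]
  case _ =>
    rintro a b ⟨t, rfl, rfl⟩
    exact ⟨t.val, ZMod.val_lt t, rfl, (key t).symm⟩

lemma ge_one_mid {A B C : ℕ} (h : B = 1) : 1 ≤ A + B + C := by omega
lemma ge_one_fst3 {A B C : ℕ} (h : A = 1) : 1 ≤ A + B + C := by omega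
lemma ge_one_lst3 {A B C : ℕ} (h : C = 1) : 1 ≤ A + B + C := by omega
lemma two_le_23 {A B C : ℕ} (h : B = 1) (h2 : C = 1) : 2 ≤ A + B + C := by omega
lemma ge_one_fst2 {A B : ℕ} (h : A = 1) : 1 ≤ A + B := by omega
lemma ge_one_lst2 {A B : ℕ} (h : B = 1) : 1 ≤ A + B := by omega
lemma two_le_2 {A B : ℕ} (h : A = 1) (h2 : B = 1) : 2 ≤ A + B := by omega

end DetaAux

namespace DetaAux

section K2
variable {k : ℕ} {p : Fin k → ℕ}

def pidx (k : ℕ) (hk : 0 < k) (j : ℕ) : Fin k := ⟨j % k, Nat.mod_lt _ hk⟩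

lemma pidx_val (k : ℕ) (hk : 0 < k) (j : ℕ) : (pidx k hk j).val = j % k := rfl

lemma pidx_add_k (k : ℕ) (hk : 0 < k) (j : ℕ) : pidx k hk (j + k) = pidx k hk j :=
  Fin.ext (by simp [pidx_val, Nat.add_mod_right])

def botV (p : Fin k → ℕ) (hp : ∀ i, 1 ≤ p i) (i : Fin k) : PartVert k p := ⟨i, ⟨0, hp i⟩⟩

def topV (p : Fin k → ℕ) (hp : ∀ i, 1 ≤ p i) (i : Fin k) : PartVert k p :=
  ⟨i, ⟨p i - 1, by have := hp i; omega⟩⟩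

variable (hk : 0 < k) (hp : ∀ i, 1 ≤ p i)

def fBot (i0 : ℕ) : ℕ → PartVert k p := fun s => botV p hp (pidx k hk (i0 + s))

def fTop (i0 : ℕ) : ℕ → PartVert k p := fun s => topV p hp (pidx k hk (i0 + s))

lemma fBot_per (i0 : ℕ) : fBot hk hp i0 k = fBot hk hp i0 0 :=
  congrArg (botV p hp) (pidx_add_k k hk i0)

lemma fTop_per (i0 : ℕ) : fTop hk hp i0 k = fTop hk hp i0 0 :=
  congrArg (topV p hp) (pidx_add_k k hk i0)

lemma fBot_shape (i0 s : ℕ) :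
    (fBot hk hp i0 s).2.val = 0 ∧ (fBot hk hp i0 (s + 1)).2.val = 0 ∧
    (fBot hk hp i0 (s + 1)).1.val = ((fBot hk hp i0 s).1.val + 1) % k := by
  refine ⟨rfl, rfl, ?_⟩
  show (i0 + (s + 1)) % k = ((i0 + s) % k + 1) % k
  rw [Nat.mod_add_mod, ← Nat.add_assoc]

lemma fTop_shape (i0 s : ℕ) :
    (fTop hk hp i0 s).2.val = p (fTop hk hp i0 s).1 - 1 ∧
    (fTop hk hp i0 (s + 1)).2.val = p (fTop hk hp i0 (s + 1)).1 - 1 ∧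
    (fTop hk hp i0 (s + 1)).1.val = ((fTop hk hp i0 s).1.val + 1) % k := by
  refine ⟨rfl, rfl, ?_⟩
  show (i0 + (s + 1)) % k = ((i0 + s) % k + 1) % k
  rw [Nat.mod_add_mod, ← Nat.add_assoc]

lemma fBot_arc (hk2 : 2 ≤ k) (i0 s : ℕ) :
    1 ≤ arcMult p (fBot hk hp i0 s) (fBot hk hp i0 (s + 1)) := by
  obtain ⟨h1, h2, h3⟩ := fBot_shape hk hp i0 s
  unfold arcMult
  rw [if_neg (by omega : ¬ k = 1)]
  exact ge_one_mid (if_pos ⟨h1, h2, h3⟩)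

lemma fTop_arc (hk2 : 2 ≤ k) (i0 s : ℕ) :
    1 ≤ arcMult p (fTop hk hp i0 s) (fTop hk hp i0 (s + 1)) := by
  obtain ⟨h1, h2, h3⟩ := fTop_shape hk hp i0 s
  unfold arcMult
  rw [if_neg (by omega : ¬ k = 1)]
  exact ge_one_lst3 (if_pos ⟨h1, h2, h3⟩)

lemma fBot_inj (i0 : ℕ) : ∀ s₁, s₁ < k → ∀ s₂, s₂ < k →
    fBot hk hp i0 s₁ = fBot hk hp i0 s₂ → s₁ = s₂ := by
  intro s₁ h₁ s₂ h₂ h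
  have := (val2_eq h).1
  exact mod_shift_inj h₁ h₂ this

lemma fTop_inj (i0 : ℕ) : ∀ s₁, s₁ < k → ∀ s₂, s₂ < k →
    fTop hk hp i0 s₁ = fTop hk hp i0 s₂ → s₁ = s₂ := by
  intro s₁ h₁ s₂ h₂ h
  have := (val2_eq h).1
  exact mod_shift_inj h₁ h₂ this

end K2
end DetaAux

namespace DetaAux

def flipV {k : ℕ} {p : Fin k → ℕ} (hp : ∀ i, 1 ≤ p i) (a : PartVert k p) : PartVert k p :=
  ⟨a.1, ⟨p a.1 - 1 - a.2.val, by have := a.2.isLt; omega⟩⟩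

lemma flipV_flipV {k : ℕ} {p : Fin k → ℕ} (hp : ∀ i, 1 ≤ p i) (a : PartVert k p) :
    flipV hp (flipV hp a) = a := by
  obtain ⟨i, r⟩ := a
  exact congrArg (Sigma.mk i) (Fin.ext (by have := r.isLt; have := hp i; simp [flipV]; omega))

lemma arcMult_flipV {k : ℕ} {p : Fin k → ℕ} (hk : 2 ≤ k) (hp : ∀ i, 1 ≤ p i)
    (a b : PartVert k p) : arcMult p (flipV hp a) (flipV hp b) = arcMult p a b := by
  obtain ⟨i, r⟩ := a
  obtain ⟨j, s⟩ := b
  have hk1 : k ≠ 1 := by omega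
  have hr := r.isLt; have hs := s.isLt
  have hpi := hp i; have hpj := hp j
  simp only [arcMult, flipV, if_neg hk1]
  have h1 : (i = j ∧ ((p j - 1 - s.val) = (p i - 1 - r.val) + 1 ∨ (p i - 1 - r.val) = (p j - 1 - s.val) + 1))
      ↔ (i = j ∧ (s.val = r.val + 1 ∨ r.val = s.val + 1)) := by
    constructor
    · rintro ⟨rfl, h⟩; exact ⟨rfl, by omega⟩
    · rintro ⟨rfl, h⟩; exact ⟨rfl, by omega⟩
  have h2 : ((p i - 1 - r.val) = 0 ∧ (p j - 1 - s.val) = 0 ∧ j.val = (i.val + 1) % k)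
      ↔ (r.val = p i - 1 ∧ s.val = p j - 1 ∧ j.val = (i.val + 1) % k) := by
    constructor <;> (rintro ⟨a1, a2, a3⟩; exact ⟨by omega, by omega, a3⟩)
  have h3 : ((p i - 1 - r.val) = p i - 1 ∧ (p j - 1 - s.val) = p j - 1 ∧ j.val = (i.val + 1) % k)
      ↔ (r.val = 0 ∧ s.val = 0 ∧ j.val = (i.val + 1) % k) := by
    constructor <;> (rintro ⟨a1, a2, a3⟩; exact ⟨by omega, by omega, a3⟩)
  erw [if_congr h1 rfl rfl, if_congr h2 rfl rfl, if_congr h3 rfl rfl]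
  omega

lemma flipV_inj {k : ℕ} {p : Fin k → ℕ} (hp : ∀ i, 1 ≤ p i) :
    Function.Injective (flipV (p := p) hp) := by
  intro a b h
  rw [← flipV_flipV hp a, h, flipV_flipV]

end DetaAux

namespace DetaAux
section L
variable {k : ℕ} {p : Fin k → ℕ} (hk : 0 < k) (hp : ∀ i, 1 ≤ p i)

/-- the "lollipop" walk: up part `i`, top arc to part `i+1`, down part `i+1`,
then along the bottoms back to part `i`. -/
def fL (i : Fin k) (s : ℕ) : PartVert k p :=
  if h1 : s < p i then ⟨i, ⟨s, h1⟩⟩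
  else if h2 : s < p i + p (pidx k hk (i.val + 1)) then
    ⟨pidx k hk (i.val + 1),
      ⟨p i + p (pidx k hk (i.val + 1)) - 1 - s, by have := hp (pidx k hk (i.val + 1)); omega⟩⟩
  else botV p hp (pidx k hk (i.val + 2 + (s - p i - p (pidx k hk (i.val + 1)))))

end L

/-- length of the lollipop. -/
def mL {k : ℕ} (p : Fin k → ℕ) (hk : 0 < k) (i : Fin k) : ℕ :=
  p i + p (pidx k hk (i.val + 1)) + (k - 2)

section L2
variable {k : ℕ} {p : Fin k → ℕ} (hk : 0 < k) (hp : ∀ i, 1 ≤ p i)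

include hp in
lemma mL_ge (i : Fin k) : 2 ≤ mL p hk i := by
  have h1 := hp i; have h2 := hp (pidx k hk (i.val + 1))
  unfold mL; omega

lemma fL_zero (i : Fin k) : fL hk hp i 0 = botV p hp i := by
  unfold fL
  erw [dif_pos (show (0:ℕ) < p i from hp i)]
  rfl

lemma pidx_self (i : Fin k) : pidx k hk i.val = i :=
  Fin.ext (by simp [pidx_val, Nat.mod_eq_of_lt i.isLt])

lemma fL_per (hk2 : 2 ≤ k) (i : Fin k) : fL hk hp i (mL p hk i) = fL hk hp i 0 := by
  have h1 := hp i; have h2 := hp (pidx k hk (i.val + 1))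
  have hm : mL p hk i = p i + p (pidx k hk (i.val + 1)) + (k - 2) := rfl
  rw [fL_zero]
  unfold fL
  erw [dif_neg (by omega), dif_neg (by omega)]
  have he : i.val + 2 + (mL p hk i - p i - p (pidx k hk (i.val + 1))) = i.val + k := by omega
  rw [he, pidx_add_k, pidx_self]
end L2
end DetaAux

namespace DetaAux
section L3
variable {k : ℕ} {p : Fin k → ℕ} (hk : 0 < k) (hp : ∀ i, 1 ≤ p i)

lemma fL_step (hk2 : 2 ≤ k) (i : Fin k) (s : ℕ) (hs : s < mL p hk i) :
    1 ≤ arcMult p (fL hk hp i s) (fL hk hp i (s + 1)) ∧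
    ((fL hk hp i s).1 = (fL hk hp i (s + 1)).1 ∨
     ((fL hk hp i s).1 = i ∧ (fL hk hp i s).2.val = p i - 1 ∧
      (fL hk hp i (s + 1)).1 = pidx k hk (i.val + 1) ∧
      (fL hk hp i (s + 1)).2.val = p (pidx k hk (i.val + 1)) - 1) ∨
     ((fL hk hp i s).2.val = 0 ∧ (fL hk hp i (s + 1)).2.val = 0 ∧
      (fL hk hp i (s + 1)).1.val = ((fL hk hp i s).1.val + 1) % k)) := by
  have h1 := hp i
  have h2 := hp (pidx k hk (i.val + 1))
  have hknot1 : ¬ k = 1 := by omega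
  have hm : mL p hk i = p i + p (pidx k hk (i.val + 1)) + (k - 2) := rfl
  by_cases hA : s + 1 < p i
  · -- up arc inside part i
    have ha : fL hk hp i s = ⟨i, ⟨s, by omega⟩⟩ := by unfold fL; erw [dif_pos]
    have hb : fL hk hp i (s + 1) = ⟨i, ⟨s + 1, hA⟩⟩ := by unfold fL; erw [dif_pos]
    rw [ha, hb]
    constructor
    · unfold arcMult
      rw [if_neg hknot1]
      exact ge_one_fst3 (if_pos ⟨rfl, Or.inl rfl⟩)
    · exact Or.inl rfl
  · by_cases hB : s + 1 = p i
    · -- the top arc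
      have ha : fL hk hp i s = ⟨i, ⟨s, by omega⟩⟩ := by unfold fL; erw [dif_pos]
      have hb : fL hk hp i (s + 1) = ⟨pidx k hk (i.val + 1),
          ⟨p i + p (pidx k hk (i.val + 1)) - 1 - (s + 1), by omega⟩⟩ := by
        unfold fL; erw [dif_neg (by omega), dif_pos (by omega)]
      rw [ha, hb]
      constructor
      · unfold arcMult
        rw [if_neg hknot1]
        refine ge_one_lst3 (if_pos ⟨?_, ?_, ?_⟩) <;> simp [pidx_val] <;> omega
      · exact Or.inr (Or.inl ⟨rfl, by simpa using by omega, rfl, by simpa using by omega⟩)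
    · by_cases hC : s + 1 < p i + p (pidx k hk (i.val + 1))
      · -- down arc inside part i+1
        have ha : fL hk hp i s = ⟨pidx k hk (i.val + 1),
            ⟨p i + p (pidx k hk (i.val + 1)) - 1 - s, by omega⟩⟩ := by
          unfold fL; erw [dif_neg (by omega), dif_pos (by omega)]
        have hb : fL hk hp i (s + 1) = ⟨pidx k hk (i.val + 1),
            ⟨p i + p (pidx k hk (i.val + 1)) - 1 - (s + 1), by omega⟩⟩ := by
          unfold fL; erw [dif_neg (by omega), dif_pos (by omega)]
        rw [ha, hb]
        constructor
        · unfold arcMult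
          rw [if_neg hknot1]
          exact ge_one_fst3 (if_pos ⟨rfl, Or.inr (by simp; omega)⟩)
        · exact Or.inl rfl
      · by_cases hD : s + 1 = p i + p (pidx k hk (i.val + 1))
        · -- bottom of part i+1 to bottom of part i+2
          have ha : fL hk hp i s = ⟨pidx k hk (i.val + 1),
              ⟨p i + p (pidx k hk (i.val + 1)) - 1 - s, by omega⟩⟩ := by
            unfold fL; erw [dif_neg (by omega), dif_pos (by omega)]
          have hb : fL hk hp i (s + 1) = botV p hp (pidx k hk (i.val + 2)) := by
            unfold fL; erw [dif_neg (by omega), dif_neg (by omega)]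
            have he : i.val + 2 + (s + 1 - p i - p (pidx k hk (i.val + 1))) = i.val + 2 := by
              omega
            rw [he]
          rw [ha, hb]
          have hsh : (botV p hp (pidx k hk (i.val + 2))).1.val
              = ((pidx k hk (i.val + 1)).val + 1) % k := by
            show (i.val + 2) % k = ((i.val + 1) % k + 1) % k
            rw [Nat.mod_add_mod]
          constructor
          · unfold arcMult
            rw [if_neg hknot1]
            exact ge_one_mid (if_pos ⟨by simp; omega, rfl, hsh⟩)
          · exact Or.inr (Or.inr ⟨by simp; omega, rfl, hsh⟩)
        · -- bottom arcs
          have hE : p i + p (pidx k hk (i.val + 1)) ≤ s := by omega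
          have ha : fL hk hp i s = botV p hp
              (pidx k hk (i.val + 2 + (s - p i - p (pidx k hk (i.val + 1))))) := by
            unfold fL; erw [dif_neg (by omega), dif_neg (by omega)]
          have hb : fL hk hp i (s + 1) = botV p hp
              (pidx k hk ((i.val + 2 + (s - p i - p (pidx k hk (i.val + 1)))) + 1)) := by
            unfold fL; erw [dif_neg (by omega), dif_neg (by omega)]
            have he : i.val + 2 + (s + 1 - p i - p (pidx k hk (i.val + 1)))
                = (i.val + 2 + (s - p i - p (pidx k hk (i.val + 1)))) + 1 := by omega
            rw [he]
          rw [ha, hb]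
          have hsh : ((i.val + 2 + (s - p i - p (pidx k hk (i.val + 1)))) + 1) % k
              = ((i.val + 2 + (s - p i - p (pidx k hk (i.val + 1)))) % k + 1) % k := by
            rw [Nat.mod_add_mod]
          constructor
          · unfold arcMult
            rw [if_neg hknot1]
            exact ge_one_mid (if_pos ⟨rfl, rfl, hsh⟩)
          · exact Or.inr (Or.inr ⟨rfl, rfl, hsh⟩)

end L3
end DetaAux

namespace DetaAux
section L4
variable {k : ℕ} {p : Fin k → ℕ} (hk : 0 < k) (hp : ∀ i, 1 ≤ p i)

lemma fL_up (i : Fin k) (j : ℕ) (hj : j + 1 < p i) :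
    (fL hk hp i j).1 = i ∧ (fL hk hp i j).2.val = j ∧
    (fL hk hp i (j + 1)).1 = i ∧ (fL hk hp i (j + 1)).2.val = j + 1 := by
  have ha : fL hk hp i j = ⟨i, ⟨j, by omega⟩⟩ := by unfold fL; erw [dif_pos]
  have hb : fL hk hp i (j + 1) = ⟨i, ⟨j + 1, hj⟩⟩ := by unfold fL; erw [dif_pos]
  rw [ha, hb]
  exact ⟨rfl, rfl, rfl, rfl⟩

lemma fL_top (i : Fin k) :
    (fL hk hp i (p i - 1)).1 = i ∧ (fL hk hp i (p i - 1)).2.val = p i - 1 ∧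
    (fL hk hp i (p i - 1 + 1)).1 = pidx k hk (i.val + 1) ∧
    (fL hk hp i (p i - 1 + 1)).2.val = p (pidx k hk (i.val + 1)) - 1 := by
  have h1 := hp i
  have h2 := hp (pidx k hk (i.val + 1))
  have ha : fL hk hp i (p i - 1) = ⟨i, ⟨p i - 1, by omega⟩⟩ := by
    unfold fL; erw [dif_pos]
  have hb : fL hk hp i (p i - 1 + 1) = ⟨pidx k hk (i.val + 1),
      ⟨p i + p (pidx k hk (i.val + 1)) - 1 - (p i - 1 + 1), by omega⟩⟩ := by
    unfold fL; erw [dif_neg (by omega), dif_pos (by omega)]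
  rw [ha, hb]
  exact ⟨rfl, rfl, rfl, by simp; omega⟩

lemma fL_inj (hk2 : 2 ≤ k) (i : Fin k) : ∀ s₁, s₁ < mL p hk i → ∀ s₂, s₂ < mL p hk i →
    fL hk hp i s₁ = fL hk hp i s₂ → s₁ = s₂ := by
  have h1 := hp i
  have h2 := hp (pidx k hk (i.val + 1))
  have hm : mL p hk i = p i + p (pidx k hk (i.val + 1)) + (k - 2) := rfl
  have hiv := i.isLt
  -- the `.1.val` of `fL i s` is `(i.val + shift s) % k` and `.2.val` is explicit
  have hval : ∀ s, s < mL p hk i →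
      (s < p i ∧ (fL hk hp i s).1.val = (i.val + 0) % k ∧ (fL hk hp i s).2.val = s) ∨
      (p i ≤ s ∧ s < p i + p (pidx k hk (i.val + 1)) ∧
        (fL hk hp i s).1.val = (i.val + 1) % k ∧
        (fL hk hp i s).2.val = p i + p (pidx k hk (i.val + 1)) - 1 - s) ∨
      (p i + p (pidx k hk (i.val + 1)) ≤ s ∧
        (fL hk hp i s).1.val = (i.val + (2 + (s - p i - p (pidx k hk (i.val + 1))))) % k ∧
        (fL hk hp i s).2.val = 0) := by
    intro s hs
    by_cases hA : s < p i
    · have ha : fL hk hp i s = ⟨i, ⟨s, hA⟩⟩ := by unfold fL; erw [dif_pos]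
      rw [ha]
      exact Or.inl ⟨hA, by simp [Nat.mod_eq_of_lt hiv], rfl⟩
    · by_cases hB : s < p i + p (pidx k hk (i.val + 1))
      · have ha : fL hk hp i s = ⟨pidx k hk (i.val + 1),
            ⟨p i + p (pidx k hk (i.val + 1)) - 1 - s, by omega⟩⟩ := by
          unfold fL; erw [dif_neg (by omega), dif_pos (by omega)]
        rw [ha]
        exact Or.inr (Or.inl ⟨by omega, hB, rfl, rfl⟩)
      · have ha : fL hk hp i s = botV p hp
            (pidx k hk (i.val + 2 + (s - p i - p (pidx k hk (i.val + 1))))) := by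
          unfold fL; erw [dif_neg (by omega), dif_neg (by omega)]
        rw [ha]
        refine Or.inr (Or.inr ⟨by omega, ?_, rfl⟩)
        show (i.val + 2 + (s - p i - p (pidx k hk (i.val + 1)))) % k = _
        rw [Nat.add_assoc]
  intro s₁ hs₁ s₂ hs₂ h
  obtain ⟨hv1, hv2⟩ := val2_eq h
  rcases hval s₁ hs₁ with ⟨c1, e1, f1⟩ | ⟨c1, c1', e1, f1⟩ | ⟨c1, e1, f1⟩ <;>
    rcases hval s₂ hs₂ with ⟨c2, e2, f2⟩ | ⟨c2, c2', e2, f2⟩ | ⟨c2, e2, f2⟩ <;>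
      rw [e1, e2] at hv1 <;> rw [f1, f2] at hv2
  · omega
  · exact absurd (mod_shift_inj (by omega) (by omega) hv1) (by omega)
  · exact absurd (mod_shift_inj (by omega) (by omega) hv1) (by omega)
  · exact absurd (mod_shift_inj (by omega) (by omega) hv1) (by omega)
  · omega
  · exact absurd (mod_shift_inj (by omega) (by omega) hv1) (by omega)
  · exact absurd (mod_shift_inj (by omega) (by omega) hv1) (by omega)
  · exact absurd (mod_shift_inj (by omega) (by omega) hv1) (by omega)
  · have := mod_shift_inj (by omega) (by omega) hv1; omega

end L4
end DetaAux

namespace DetaAux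
section K1
variable {p : Fin 1 → ℕ} (hp : ∀ i, 1 ≤ p i)

def fFwd (u : PartVert 1 p) : ℕ → PartVert 1 p :=
  fun s => ⟨u.1, ⟨(u.2.val + s) % p u.1, Nat.mod_lt _ (hp u.1)⟩⟩

def fBwd (u : PartVert 1 p) : ℕ → PartVert 1 p :=
  fun s => ⟨u.1, ⟨(u.2.val + p u.1 - s) % p u.1, Nat.mod_lt _ (hp u.1)⟩⟩

lemma fFwd_per (u : PartVert 1 p) : fFwd hp u (p u.1) = fFwd hp u 0 :=
  vert_ext rfl (by show (u.2.val + p u.1) % p u.1 = (u.2.val + 0) % p u.1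
                   rw [Nat.add_mod_right, Nat.add_zero])

lemma fBwd_per (u : PartVert 1 p) : fBwd hp u (p u.1) = fBwd hp u 0 :=
  vert_ext rfl (by show (u.2.val + p u.1 - p u.1) % p u.1 = (u.2.val + p u.1 - 0) % p u.1
                   rw [Nat.add_sub_cancel, Nat.sub_zero, Nat.add_mod_right])

lemma fFwd_zero (u : PartVert 1 p) : fFwd hp u 0 = u :=
  vert_ext rfl (by show (u.2.val + 0) % p u.1 = u.2.val
                   rw [Nat.add_zero, Nat.mod_eq_of_lt u.2.isLt])

lemma fBwd_zero (u : PartVert 1 p) : fBwd hp u 0 = u :=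
  vert_ext rfl (by show (u.2.val + p u.1 - 0) % p u.1 = u.2.val
                   rw [Nat.sub_zero, Nat.add_mod_right, Nat.mod_eq_of_lt u.2.isLt])

lemma fFwd_step (u : PartVert 1 p) (s : ℕ) :
    (fFwd hp u (s + 1)).2.val = ((fFwd hp u s).2.val + 1) % p (fFwd hp u s).1 := by
  show (u.2.val + (s + 1)) % p u.1 = ((u.2.val + s) % p u.1 + 1) % p u.1
  rw [Nat.mod_add_mod, Nat.add_assoc]

lemma fBwd_step (u : PartVert 1 p) (s : ℕ) (hs : s < p u.1) :
    (fBwd hp u s).2.val = ((fBwd hp u (s + 1)).2.val + 1) % p (fBwd hp u (s + 1)).1 := by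
  show (u.2.val + p u.1 - s) % p u.1 = ((u.2.val + p u.1 - (s + 1)) % p u.1 + 1) % p u.1
  rw [Nat.mod_add_mod]
  congr 1
  omega

lemma fFwd_arc (u : PartVert 1 p) (s : ℕ) :
    1 ≤ arcMult p (fFwd hp u s) (fFwd hp u (s + 1)) := by
  unfold arcMult
  rw [if_pos rfl]
  exact ge_one_fst2 (if_pos (fFwd_step hp u s))

lemma fBwd_arc (u : PartVert 1 p) (s : ℕ) (hs : s < p u.1) :
    1 ≤ arcMult p (fBwd hp u s) (fBwd hp u (s + 1)) := by
  unfold arcMult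
  rw [if_pos rfl]
  exact ge_one_lst2 (if_pos (fBwd_step hp u s hs))

lemma fFwd_inj (u : PartVert 1 p) : ∀ s₁, s₁ < p u.1 → ∀ s₂, s₂ < p u.1 →
    fFwd hp u s₁ = fFwd hp u s₂ → s₁ = s₂ := by
  intro s₁ h₁ s₂ h₂ h
  exact mod_shift_inj h₁ h₂ (val2_eq h).2

lemma fBwd_inj (u : PartVert 1 p) : ∀ s₁, s₁ < p u.1 → ∀ s₂, s₂ < p u.1 →
    fBwd hp u s₁ = fBwd hp u s₂ → s₁ = s₂ := by
  intro s₁ h₁ s₂ h₂ h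
  have hv := (val2_eq h).2
  have hv' : (u.2.val + p u.1 - s₁) % p u.1 = (u.2.val + p u.1 - s₂) % p u.1 := hv
  have h3 : (u.2.val + p u.1 - s₁ + (s₁ + s₂)) % p u.1
      = (u.2.val + p u.1 - s₂ + (s₁ + s₂)) % p u.1 := by
    rw [Nat.add_mod, hv', ← Nat.add_mod]
  have e1 : u.2.val + p u.1 - s₁ + (s₁ + s₂) = u.2.val + p u.1 + s₂ := by omega
  have e2 : u.2.val + p u.1 - s₂ + (s₁ + s₂) = u.2.val + p u.1 + s₁ := by omega
  rw [e1, e2] at h3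
  exact (mod_shift_inj h₂ h₁ h3).symm

end K1
end DetaAux

namespace DetaAux
section Two
variable {k : ℕ} {p : Fin k → ℕ}

/-- the 2-cycle through `u` and `v`. -/
def twoCyc (u v : PartVert k p) : ZMod 2 → PartVert k p :=
  fun t => if t = 0 then u else v

lemma twoCyc_inj {u v : PartVert k p} (huv : u ≠ v) : Function.Injective (twoCyc u v) := by
  intro a b h
  have hall : ∀ t : ZMod 2, t = 0 ∨ t = 1 := by decide
  have h11 : (1 : ZMod 2) ≠ 0 := by decide
  rcases hall a with rfl | rfl <;> rcases hall b with rfl | rfl <;>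
    simp_all [twoCyc]

lemma twoCyc_arc {u v : PartVert k p} (h1 : 1 ≤ arcMult p u v) (h2 : 1 ≤ arcMult p v u) :
    ∀ t : ZMod 2, 1 ≤ arcMult p (twoCyc u v t) (twoCyc u v (t + 1)) := by
  intro t
  have hall : ∀ t : ZMod 2, t = 0 ∨ t = 1 := by decide
  rcases hall t with rfl | rfl
  · simpa [twoCyc] using h1
  · simpa [twoCyc, show (1 + 1 : ZMod 2) = 0 by decide] using h2

lemma twoCyc_cont (u v : PartVert k p) : twoCyc u v 0 = u ∧ twoCyc u v (0 + 1) = v := by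
  constructor <;> simp [twoCyc]

lemma twoCyc_char {u v a b : PartVert k p}
    (h : ∃ t : ZMod 2, twoCyc u v t = a ∧ twoCyc u v (t + 1) = b) :
    (a = u ∧ b = v) ∨ (a = v ∧ b = u) := by
  obtain ⟨t, h1, h2⟩ := h
  have hall : ∀ t : ZMod 2, t = 0 ∨ t = 1 := by decide
  have h11 : (1 + 1 : ZMod 2) = 0 := by decide
  rcases hall t with rfl | rfl
  · left; constructor <;> simp_all [twoCyc]
  · right; constructor <;> simp_all [twoCyc, h11]

/-- any injective cycle of length ≥ 3 through `(u,v)` shares no arc with the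
2-cycle on `(u,v)` except `(u,v)` itself. -/
lemma no_rev {m : ℕ} (hm : 3 ≤ m) {u v a b : PartVert k p}
    (c : ZMod m → PartVert k p) (hinj : Function.Injective c)
    (hcont : ∃ t, c t = u ∧ c (t + 1) = v)
    (hne : ¬(a = u ∧ b = v)) (hab : (a = u ∧ b = v) ∨ (a = v ∧ b = u))
    (h2 : ∃ t : ZMod m, c t = a ∧ c (t + 1) = b) : False := by
  rcases hab with h | ⟨rfl, rfl⟩
  · exact hne h
  obtain ⟨t, ht1, ht2⟩ := hcont
  obtain ⟨s, hs1, hs2⟩ := h2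
  haveI : NeZero m := ⟨by omega⟩
  have e1 : s = t + 1 := hinj (hs1.trans ht2.symm)
  have e2 : s + 1 = t := hinj (hs2.trans ht1.symm)
  rw [e1] at e2
  have e3 : t + (1 + 1) = t + 0 := by rw [← add_assoc, e2, add_zero]
  have h20 : (2 : ZMod m) = 0 := by
    rw [← one_add_one_eq_two]
    exact add_left_cancel e3
  have hv : ((2 : ℕ) : ZMod m).val = 2 := ZMod.val_natCast_of_lt (by omega)
  rw [show ((2 : ℕ) : ZMod m) = (2 : ZMod m) by push_cast; rfl, h20] at hv
  simp [ZMod.val_zero] at hv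

end Two
end DetaAux

open DetaAux

/-- For each arc `(u, v)` of `D_η` there are two directed cycles both containing
`(u, v)` and sharing no arc other than `(u, v)`.  A directed cycle is modelled as an
injective map `c : ZMod m → PartVert k p` (`m ≥ 2`) whose consecutive values are
joined by arcs; two cycles traversing a common pair `(a, b) ≠ (u, v)` is permitted
only when `(a, b)` carries at least two parallel arcs. -/
theorem Deta_two_cycles_through_arc (n k : ℕ) (hn : 2 ≤ n)
    (hk : 1 ≤ k) (hkn : k ≤ n) (p : Fin k → ℕ)
    (hp : ∀ i, 1 ≤ p i) (hsum : ∑ i, p i = n)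
    (u v : PartVert k p) (huv : 1 ≤ arcMult p u v) :
    ∃ (m₁ m₂ : ℕ) (c₁ : ZMod m₁ → PartVert k p) (c₂ : ZMod m₂ → PartVert k p),
      2 ≤ m₁ ∧ 2 ≤ m₂ ∧ Function.Injective c₁ ∧ Function.Injective c₂ ∧
      (∀ t : ZMod m₁, 1 ≤ arcMult p (c₁ t) (c₁ (t + 1))) ∧
      (∀ t : ZMod m₂, 1 ≤ arcMult p (c₂ t) (c₂ (t + 1))) ∧
      (∃ t : ZMod m₁, c₁ t = u ∧ c₁ (t + 1) = v) ∧
      (∃ t : ZMod m₂, c₂ t = u ∧ c₂ (t + 1) = v) ∧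
      (∀ a b : PartVert k p, ¬(a = u ∧ b = v) →
        (∃ t : ZMod m₁, c₁ t = a ∧ c₁ (t + 1) = b) →
        (∃ t : ZMod m₂, c₂ t = a ∧ c₂ (t + 1) = b) →
        2 ≤ arcMult p a b) := by
  classical
  by_cases hk1 : k = 1
  · -- ===================== the case k = 1 =====================
    subst hk1
    have hvu1 : v.1 = u.1 := Subsingleton.elim _ _
    have hpv : p v.1 = p u.1 := congrArg p hvu1
    have hN2 : 2 ≤ p u.1 := by
      rw [Fin.sum_univ_one] at hsum
      have h0 : u.1 = 0 := Subsingleton.elim _ _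
      have := congrArg p h0
      omega
    unfold arcMult at huv
    rw [if_pos rfl] at huv
    by_cases hfwd : v.2.val = (u.2.val + 1) % p u.1
    · -- forward arc
      have hune : u ≠ v := by
        intro h
        have h2 := (val2_eq h).2
        have hsn := succ_mod_ne hN2 u.2.isLt
        omega
      have harcuv : 1 ≤ arcMult p u v := by
        unfold arcMult; rw [if_pos rfl]; exact ge_one_fst2 (if_pos hfwd)
      have harcvu : 1 ≤ arcMult p v u := by
        unfold arcMult; rw [if_pos rfl]; exact ge_one_lst2 (if_pos hfwd)
      obtain ⟨c, hcinj, hcarc, hccont, hcchar⟩ :=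
        build hN2 (fFwd hp u) (fFwd_per hp u) (fFwd_inj hp u) (fun s _ => fFwd_arc hp u s)
      refine ⟨p u.1, 2, c, twoCyc u v, hN2, le_refl 2, hcinj, twoCyc_inj hune,
        hcarc, twoCyc_arc harcuv harcvu, ?_, ⟨0, twoCyc_cont u v⟩, ?_⟩
      · refine ⟨((0 : ℕ) : ZMod (p u.1)), ?_, ?_⟩
        · rw [(hccont 0 (by omega)).1, fFwd_zero]
        · rw [(hccont 0 (by omega)).2]
          exact vert_ext hvu1.symm hfwd.symm
      · intro a b hne hin1 hin2
        rcases twoCyc_char hin2 with h | ⟨h1, h2⟩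
        · exact absurd h hne
        obtain ⟨s, hs, hfs, hfs1⟩ := hcchar _ _ hin1
        rw [h1] at hfs
        rw [h2] at hfs1
        have hstep := fFwd_step hp u s
        rw [hfs, hfs1] at hstep
        rw [h1, h2]
        unfold arcMult
        rw [if_pos rfl]
        exact two_le_2 (if_pos hstep) (if_pos hfwd)
    · -- backward arc
      have hbwd : u.2.val = (v.2.val + 1) % p v.1 := by
        rw [if_neg hfwd] at huv
        by_contra hb
        rw [if_neg hb] at huv
        omega
      have hune : u ≠ v := by
        intro h
        have h2 := (val2_eq h).2
        have hsn := succ_mod_ne (show 2 ≤ p v.1 by omega) v.2.isLt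
        omega
      have harcuv : 1 ≤ arcMult p u v := by
        unfold arcMult; rw [if_pos rfl]; exact ge_one_lst2 (if_pos hbwd)
      have harcvu : 1 ≤ arcMult p v u := by
        unfold arcMult; rw [if_pos rfl]; exact ge_one_fst2 (if_pos hbwd)
      obtain ⟨c, hcinj, hcarc, hccont, hcchar⟩ :=
        build hN2 (fBwd hp u) (fBwd_per hp u) (fBwd_inj hp u)
          (fun s hs => fBwd_arc hp u s hs)
      refine ⟨p u.1, 2, c, twoCyc u v, hN2, le_refl 2, hcinj, twoCyc_inj hune,
        hcarc, twoCyc_arc harcuv harcvu, ?_, ⟨0, twoCyc_cont u v⟩, ?_⟩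
      · refine ⟨((0 : ℕ) : ZMod (p u.1)), ?_, ?_⟩
        · rw [(hccont 0 (by omega)).1, fBwd_zero]
        · rw [(hccont 0 (by omega)).2]
          refine vert_ext hvu1.symm ?_
          show (u.2.val + p u.1 - 1) % p u.1 = v.2.val
          obtain ⟨w, hw⟩ : ∃ w, v.2.val = w := ⟨_, rfl⟩
          have hvlt : w < p u.1 := by have := v.2.isLt; omega
          rw [hw] at hbwd ⊢
          rw [hpv] at hbwd
          rcases Nat.lt_or_ge (w + 1) (p u.1) with h | h
          · rw [Nat.mod_eq_of_lt h] at hbwd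
            rw [hbwd]
            have e : w + 1 + p u.1 - 1 = w + p u.1 := by omega
            rw [e, Nat.add_mod_right, Nat.mod_eq_of_lt hvlt]
          · have he : w + 1 = p u.1 := by omega
            rw [he, Nat.mod_self] at hbwd
            rw [hbwd]
            have e : 0 + p u.1 - 1 = p u.1 - 1 := by omega
            rw [e, Nat.mod_eq_of_lt (by omega)]
            omega
      · intro a b hne hin1 hin2
        rcases twoCyc_char hin2 with h | ⟨h1, h2⟩
        · exact absurd h hne
        obtain ⟨s, hs, hfs, hfs1⟩ := hcchar _ _ hin1
        rw [h1] at hfs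
        rw [h2] at hfs1
        have hstep := fBwd_step hp u s hs
        rw [hfs, hfs1] at hstep
        rw [h1, h2]
        unfold arcMult
        rw [if_pos rfl]
        exact two_le_2 (if_pos hbwd) (if_pos hstep)
  · -- ===================== the case k ≥ 2 =====================
    have hk2 : 2 ≤ k := by omega
    have hk0 : 0 < k := by omega
    unfold arcMult at huv
    rw [if_neg hk1] at huv
    by_cases hC1 : u.1 = v.1 ∧ (v.2.val = u.2.val + 1 ∨ u.2.val = v.2.val + 1)
    · -- ------------- path arc -------------
      obtain ⟨he1, hor⟩ := hC1
      have hune : u ≠ v := by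
        intro h; have := (val2_eq h).2; omega
      have harcuv : 1 ≤ arcMult p u v := by
        unfold arcMult; rw [if_neg hk1]; exact ge_one_fst3 (if_pos ⟨he1, hor⟩)
      have harcvu : 1 ≤ arcMult p v u := by
        unfold arcMult; rw [if_neg hk1]; exact ge_one_fst3 (if_pos ⟨he1.symm, hor.symm⟩)
      have hpv : p v.1 = p u.1 := congrArg p he1.symm
      have hpi' := hp (pidx k hk0 (u.1.val + 1))
      obtain ⟨c, hcinj, hcarc, hccont, hcchar⟩ :=
        build (mL_ge hk0 hp u.1) (fL hk0 hp u.1) (fL_per hk0 hp hk2 u.1)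
          (fL_inj hk0 hp hk2 u.1) (fun s hs => (fL_step hk0 hp hk2 u.1 s hs).1)
      rcases hor with hup | hdown
      · -- up arc
        have hj : u.2.val + 1 < p u.1 := by have := v.2.isLt; omega
        have hm3 : 3 ≤ mL p hk0 u.1 := by
          show 3 ≤ p u.1 + _ + (k - 2); omega
        have hcont2 : ∃ t : ZMod (mL p hk0 u.1), c t = u ∧ c (t + 1) = v := by
          have hs : u.2.val < mL p hk0 u.1 := by show _ < p u.1 + _ + _; omega
          obtain ⟨hca, hcb⟩ := hccont u.2.val hs
          obtain ⟨e1, e2, e3, e4⟩ := fL_up hk0 hp u.1 u.2.val hj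
          refine ⟨(u.2.val : ZMod _), ?_, ?_⟩
          · rw [hca]; exact vert_ext e1 e2
          · rw [hcb]; refine vert_ext (e3.trans he1) ?_; rw [e4]; omega
        refine ⟨2, mL p hk0 u.1, twoCyc u v, c, le_refl 2, by omega, twoCyc_inj hune,
          hcinj, twoCyc_arc harcuv harcvu, hcarc, ⟨0, twoCyc_cont u v⟩, hcont2, ?_⟩
        intro a b hne hin1 hin2
        exact (no_rev hm3 c hcinj hcont2 hne (twoCyc_char hin1) hin2).elim
      · -- down arc
        have hj : v.2.val + 1 < p u.1 := by have := u.2.isLt; omega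
        have hm3 : 3 ≤ mL p hk0 u.1 := by
          show 3 ≤ p u.1 + _ + (k - 2); omega
        set q : ℕ := p u.1 - 2 - v.2.val with hqdef
        have hq : q + 1 < p u.1 := by omega
        obtain ⟨e1, e2, e3, e4⟩ := fL_up hk0 hp u.1 q hq
        have hp1 := congrArg p e1
        have hp3 := congrArg p e3
        have hcont2 : ∃ t : ZMod (mL p hk0 u.1),
            flipV hp (c t) = u ∧ flipV hp (c (t + 1)) = v := by
          have hs : q < mL p hk0 u.1 := by show _ < p u.1 + _ + _; omega
          obtain ⟨hca, hcb⟩ := hccont q hs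
          refine ⟨(q : ZMod _), ?_, ?_⟩
          · rw [hca]
            refine vert_ext e1 ?_
            show p (fL hk0 hp u.1 q).1 - 1 - (fL hk0 hp u.1 q).2.val = u.2.val
            omega
          · rw [hcb]
            refine vert_ext (e3.trans he1) ?_
            show p (fL hk0 hp u.1 (q + 1)).1 - 1 - (fL hk0 hp u.1 (q + 1)).2.val = v.2.val
            omega
        refine ⟨2, mL p hk0 u.1, twoCyc u v, fun t => flipV hp (c t), le_refl 2, by omega,
          twoCyc_inj hune, fun t₁ t₂ h => hcinj (flipV_inj hp h),
          twoCyc_arc harcuv harcvu, ?_, ⟨0, twoCyc_cont u v⟩, hcont2, ?_⟩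
        · intro t
          show 1 ≤ arcMult p (flipV hp (c t)) (flipV hp (c (t + 1)))
          rw [arcMult_flipV hk2 hp]
          exact hcarc t
        · intro a b hne hin1 hin2
          exact (no_rev hm3 _ (fun t₁ t₂ h => hcinj (flipV_inj hp h)) hcont2 hne
            (twoCyc_char hin1) hin2).elim
    · by_cases hC2 : u.2.val = 0 ∧ v.2.val = 0 ∧ v.1.val = (u.1.val + 1) % k
      · -- ------------- bottom cross arc -------------
        obtain ⟨hu2, hv2, hmod⟩ := hC2
        have hv1 : v.1 = pidx k hk0 (u.1.val + 1) := Fin.ext (by rw [pidx_val]; exact hmod)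
        have hpv1 := congrArg p hv1
        have hpi' := hp (pidx k hk0 (u.1.val + 1))
        have hpid0 : pidx k hk0 (u.1.val + 0) = u.1 := by
          rw [Nat.add_zero]; exact pidx_self hk0 u.1
        obtain ⟨c1, hc1inj, hc1arc, hc1cont, hc1char⟩ :=
          build hk2 (fBot hk0 hp u.1.val) (fBot_per hk0 hp u.1.val)
            (fBot_inj hk0 hp u.1.val) (fun s _ => fBot_arc hk0 hp hk2 u.1.val s)
        obtain ⟨c, hcinj, hcarc, hccont, hcchar⟩ :=
          build (mL_ge hk0 hp u.1) (fL hk0 hp u.1) (fL_per hk0 hp hk2 u.1)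
            (fL_inj hk0 hp hk2 u.1) (fun s hs => (fL_step hk0 hp hk2 u.1 s hs).1)
        have hf0 : fBot hk0 hp u.1.val 0 = u := by
          unfold fBot
          exact vert_ext (show (botV p hp (pidx k hk0 (u.1.val + 0))).1 = u.1 from hpid0)
            (show 0 = u.2.val from hu2.symm)
        have hf1 : fBot hk0 hp u.1.val 1 = v := by
          unfold fBot
          exact vert_ext (show (botV p hp (pidx k hk0 (u.1.val + 1))).1 = v.1 from hv1.symm)
            (show 0 = v.2.val from hv2.symm)
        obtain ⟨e1, e2, e3, e4⟩ := fL_top hk0 hp u.1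
        have hpe1 := congrArg p e1
        have hpe3 := congrArg p e3
        have hcont2 : ∃ t : ZMod (mL p hk0 u.1),
            flipV hp (c t) = u ∧ flipV hp (c (t + 1)) = v := by
          have hs : p u.1 - 1 < mL p hk0 u.1 := by
            show _ < p u.1 + _ + _; have := hp u.1; omega
          obtain ⟨hca, hcb⟩ := hccont (p u.1 - 1) hs
          refine ⟨((p u.1 - 1 : ℕ) : ZMod _), ?_, ?_⟩
          · rw [hca]
            refine vert_ext e1 ?_
            show p (fL hk0 hp u.1 (p u.1 - 1)).1 - 1 - (fL hk0 hp u.1 (p u.1 - 1)).2.val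
              = u.2.val
            have := hp u.1; omega
          · rw [hcb]
            refine vert_ext (e3.trans hv1.symm) ?_
            show p (fL hk0 hp u.1 (p u.1 - 1 + 1)).1 - 1
              - (fL hk0 hp u.1 (p u.1 - 1 + 1)).2.val = v.2.val
            omega
        refine ⟨k, mL p hk0 u.1, c1, fun t => flipV hp (c t), hk2, mL_ge hk0 hp u.1,
          hc1inj, fun t₁ t₂ h => hcinj (flipV_inj hp h), hc1arc, ?_, ?_, hcont2, ?_⟩
        · intro t
          show 1 ≤ arcMult p (flipV hp (c t)) (flipV hp (c (t + 1)))
          rw [arcMult_flipV hk2 hp]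
          exact hcarc t
        · refine ⟨((0 : ℕ) : ZMod k), ?_, ?_⟩
          · rw [(hc1cont 0 hk0).1, hf0]
          · rw [(hc1cont 0 hk0).2, hf1]
        · intro a b hne hin1 hin2
          obtain ⟨s1, hs1, hbs, hbs1⟩ := hc1char _ _ hin1
          have hsh := fBot_shape hk0 hp u.1.val s1
          rw [hbs, hbs1] at hsh
          obtain ⟨ha2, hb2, habmod⟩ := hsh
          obtain ⟨t, ht1, ht2⟩ := hin2
          have ht1' : flipV hp (c t) = a := ht1
          have ht2' : flipV hp (c (t + 1)) = b := ht2
          have hct1 : c t = flipV hp a := by rw [← ht1', flipV_flipV]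
          have hct2 : c (t + 1) = flipV hp b := by rw [← ht2', flipV_flipV]
          obtain ⟨s2, hs2, hfs, hfs1⟩ := hcchar _ _ ⟨t, hct1, hct2⟩
          have hstep := (fL_step hk0 hp hk2 u.1 s2 hs2).2
          rw [hfs, hfs1] at hstep
          rcases hstep with hL | ⟨m1, m2, m3, m4⟩ | ⟨r1, r2, r3⟩
          · exfalso
            have hab : a.1.val = b.1.val := congrArg Fin.val hL
            have hne' := mod_succ_ne hk2 a.1.val
            have hBB : a.1.val % k = a.1.val := Nat.mod_eq_of_lt a.1.isLt
            omega
          · exfalso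
            apply hne
            have m1' : a.1 = u.1 := m1
            have m3' : b.1 = pidx k hk0 (u.1.val + 1) := m3
            exact ⟨vert_ext m1' (by omega), vert_ext (m3'.trans hv1.symm) (by omega)⟩
          · have hpa := hp a.1; have hpb := hp b.1
            have r1' : p a.1 - 1 - a.2.val = 0 := r1
            have r2' : p b.1 - 1 - b.2.val = 0 := r2
            unfold arcMult
            rw [if_neg hk1]
            exact two_le_23 (if_pos ⟨ha2, hb2, habmod⟩)
              (if_pos ⟨by omega, by omega, habmod⟩)
      · -- ------------- top cross arc -------------
        have hC3 : u.2.val = p u.1 - 1 ∧ v.2.val = p v.1 - 1 ∧ v.1.val = (u.1.val + 1) % k := by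
          rw [if_neg hC1, if_neg hC2] at huv
          by_contra hb
          rw [if_neg hb] at huv
          omega
        obtain ⟨hu2, hv2, hmod⟩ := hC3
        have hv1 : v.1 = pidx k hk0 (u.1.val + 1) := Fin.ext (by rw [pidx_val]; exact hmod)
        have hpv1 := congrArg p hv1
        have hpi' := hp (pidx k hk0 (u.1.val + 1))
        have hpu := hp u.1
        have hpvv := hp v.1
        have hpid0 : pidx k hk0 (u.1.val + 0) = u.1 := by
          rw [Nat.add_zero]; exact pidx_self hk0 u.1
        have hpid0' := congrArg p hpid0
        obtain ⟨c1, hc1inj, hc1arc, hc1cont, hc1char⟩ :=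
          build hk2 (fTop hk0 hp u.1.val) (fTop_per hk0 hp u.1.val)
            (fTop_inj hk0 hp u.1.val) (fun s _ => fTop_arc hk0 hp hk2 u.1.val s)
        obtain ⟨c, hcinj, hcarc, hccont, hcchar⟩ :=
          build (mL_ge hk0 hp u.1) (fL hk0 hp u.1) (fL_per hk0 hp hk2 u.1)
            (fL_inj hk0 hp hk2 u.1) (fun s hs => (fL_step hk0 hp hk2 u.1 s hs).1)
        have hf0 : fTop hk0 hp u.1.val 0 = u := by
          unfold fTop
          refine vert_ext (show (topV p hp (pidx k hk0 (u.1.val + 0))).1 = u.1 from hpid0) ?_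
          show p (pidx k hk0 (u.1.val + 0)) - 1 = u.2.val
          omega
        have hf1 : fTop hk0 hp u.1.val 1 = v := by
          unfold fTop
          refine vert_ext (show (topV p hp (pidx k hk0 (u.1.val + 1))).1 = v.1 from hv1.symm) ?_
          show p (pidx k hk0 (u.1.val + 1)) - 1 = v.2.val
          omega
        obtain ⟨e1, e2, e3, e4⟩ := fL_top hk0 hp u.1
        have hpe1 := congrArg p e1
        have hpe3 := congrArg p e3
        have hcont2 : ∃ t : ZMod (mL p hk0 u.1), c t = u ∧ c (t + 1) = v := by
          have hs : p u.1 - 1 < mL p hk0 u.1 := by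
            show _ < p u.1 + _ + _; omega
          obtain ⟨hca, hcb⟩ := hccont (p u.1 - 1) hs
          refine ⟨((p u.1 - 1 : ℕ) : ZMod _), ?_, ?_⟩
          · rw [hca]
            exact vert_ext e1 (by omega)
          · rw [hcb]
            exact vert_ext (e3.trans hv1.symm) (by omega)
        refine ⟨k, mL p hk0 u.1, c1, c, hk2, mL_ge hk0 hp u.1,
          hc1inj, hcinj, hc1arc, hcarc, ?_, hcont2, ?_⟩
        · refine ⟨((0 : ℕ) : ZMod k), ?_, ?_⟩
          · rw [(hc1cont 0 hk0).1, hf0]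
          · rw [(hc1cont 0 hk0).2, hf1]
        · intro a b hne hin1 hin2
          obtain ⟨s1, hs1, hts, hts1⟩ := hc1char _ _ hin1
          have hsh := fTop_shape hk0 hp u.1.val s1
          rw [hts, hts1] at hsh
          obtain ⟨ha2, hb2, habmod⟩ := hsh
          obtain ⟨s2, hs2, hfs, hfs1⟩ := hcchar _ _ hin2
          have hstep := (fL_step hk0 hp hk2 u.1 s2 hs2).2
          rw [hfs, hfs1] at hstep
          rcases hstep with hL | ⟨m1, m2, m3, m4⟩ | ⟨r1, r2, r3⟩
          · exfalso
            have hab : a.1.val = b.1.val := congrArg Fin.val hL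
            have hne' := mod_succ_ne hk2 a.1.val
            have hBB : a.1.val % k = a.1.val := Nat.mod_eq_of_lt a.1.isLt
            omega
          · exfalso
            apply hne
            have hpm1 := congrArg p m1
            have hpm3 := congrArg p m3
            exact ⟨vert_ext m1 (by omega), vert_ext (m3.trans hv1.symm) (by omega)⟩
          · have hpa := hp a.1; have hpb := hp b.1
            unfold arcMult
            rw [if_neg hk1]
            exact two_le_23 (if_pos ⟨r1, r2, habmod⟩) (if_pos ⟨ha2, hb2, habmod⟩)
end

section
/- Let η be a k-partition of an integer n ≥ 2, with 1 ≤ k ≤ n. For every nonempty proper subset X ⊊ V(D_η), the number of edges of the underlying multigraph G_η with one endpoint in X and the other endpoint in V(D_η)∖X is at least 4. -/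
open Fin.NatCast in
/-- If a Bool function on a cyclic index set has no change, it is constant. -/
lemma cyc_const {N : ℕ} [NeZero N] (z : Fin N → Bool)
    (h : ∀ l : Fin N, z l = z (l + 1)) (a b : Fin N) : z a = z b := by
  have key : ∀ (t : ℕ) (l : Fin N), z l = z (l + t) := by
    intro t
    induction t with
    | zero => simp
    | succ t ih =>
      intro l
      have : ((t + 1 : ℕ) : Fin N) = (t : Fin N) + 1 := by push_cast; ring
      rw [this, ← add_assoc, ← h (l + t)]
      exact ih l
  have := key (b - a).val a
  rwa [Fin.cast_val_eq_self, add_sub_cancel] at this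

/-- On a cycle, a change position has a companion: another change position. -/
lemma cyc_two_changes {N : ℕ} [NeZero N] (z : Fin N → Bool)
    {l1 : Fin N} (h1 : z l1 ≠ z (l1 + 1)) :
    ∃ l2 : Fin N, l2 ≠ l1 ∧ z l2 ≠ z (l2 + 1) := by
  by_contra hno
  push_neg at hno
  set f : Fin N → ZMod 2 := fun i => if z i then 1 else 0 with hf
  have hsum : ∑ i, (f i + f (i + 1)) = 0 := by
    rw [Finset.sum_add_distrib]
    have : ∑ i, f (i + 1) = ∑ i, f i := Equiv.sum_comp (Equiv.addRight 1) f
    rw [this, ← two_mul, show (2 : ZMod 2) = 0 from rfl, zero_mul]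
  have hsingle : ∑ i, (f i + f (i + 1)) = f l1 + f (l1 + 1) := by
    apply Finset.sum_eq_single
    · intro b _ hbne
      have := hno b hbne
      simp only [hf, this]
      rw [← two_mul, show (2 : ZMod 2) = 0 from rfl, zero_mul]
    · intro h; exact absurd (Finset.mem_univ l1) h
  have hval : f l1 + f (l1 + 1) = 1 := by
    rcases hz1 : z l1 <;> rcases hz2 : z (l1 + 1) <;>
      first
        | exact absurd (hz1.trans hz2.symm) h1
        | (simp only [hf, hz1, hz2]; decide)
  rw [hsingle, hval] at hsum
  exact one_ne_zero hsum

/-- On a path, no change implies constancy. -/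
lemma path_const (z : ℕ → Bool) (M : ℕ) (h : ∀ j, j + 1 < M → z j = z (j + 1)) :
    ∀ j, j < M → z j = z 0 := by
  intro j
  induction j with
  | zero => intro _; rfl
  | succ j ih =>
    intro hj
    rw [← h j hj]
    exact ih (by omega)

lemma path_one_change (z : ℕ → Bool) (M : ℕ) (h : z 0 ≠ z (M - 1)) :
    ∃ j, j + 1 < M ∧ z j ≠ z (j + 1) := by
  by_contra hno
  push_neg at hno
  rcases Nat.eq_zero_or_pos M with hM | hM
  · subst hM; simp at h
  · exact h ((path_const z M hno (M - 1) (by omega)).symm)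

lemma path_two_changes (z : ℕ → Bool) (M : ℕ) (hends : z 0 = z (M - 1))
    {j : ℕ} (hj : j < M) (hne : z j ≠ z 0) :
    ∃ j1 j2, j1 < j2 ∧ j1 + 1 < M ∧ j2 + 1 < M ∧
      z j1 ≠ z (j1 + 1) ∧ z j2 ≠ z (j2 + 1) := by
  have hex : ∃ t, z t ≠ z 0 := ⟨j, hne⟩
  obtain ⟨t, htp, htmin⟩ : ∃ t, z t ≠ z 0 ∧ ∀ s, z s ≠ z 0 → t ≤ s :=
    ⟨Nat.find hex, Nat.find_spec hex, fun s hs => Nat.find_min' hex hs⟩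
  obtain ⟨t', ht'p, ht'le, ht'max⟩ :
      ∃ t', z t' ≠ z 0 ∧ t' ≤ M - 1 ∧ ∀ s, t' < s → s ≤ M - 1 → z s = z 0 := by
    refine ⟨Nat.findGreatest (fun s => z s ≠ z 0) (M - 1),
      Nat.findGreatest_spec (P := fun s => z s ≠ z 0) (by omega) hne,
      Nat.findGreatest_le (P := fun s => z s ≠ z 0) (M - 1), fun s hs1 hs2 => ?_⟩
    by_contra hc
    exact Nat.findGreatest_is_greatest (P := fun s => z s ≠ z 0) hs1 hs2 hc
  have ht1 : 1 ≤ t := by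
    rcases Nat.eq_zero_or_pos t with h0 | h0
    · exfalso; apply htp; rw [h0]
    · exact h0
  have htm : z (t - 1) = z 0 := by
    by_contra hc
    exact absurd (htmin _ hc) (by omega)
  have ht'lt : t' < M - 1 := by
    rcases Nat.lt_or_ge t' (M - 1) with h' | h'
    · exact h'
    · exfalso; apply ht'p; rw [show t' = M - 1 by omega, ← hends]
  have ht'1 : z (t' + 1) = z 0 := ht'max _ (by omega) (by omega)
  have htt' : t ≤ t' := htmin _ ht'p
  refine ⟨t - 1, t', by omega, by omega, by omega, ?_, ?_⟩
  · rw [htm, show t - 1 + 1 = t by omega]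
    exact fun hh => htp hh.symm
  · rw [ht'1]; exact ht'p

lemma sum_pair_le {α : Type*} [DecidableEq α] {s : Finset α} (f : α → ℕ) {q1 q2 : α}
    (h1 : q1 ∈ s) (h2 : q2 ∈ s) (hne : q1 ≠ q2) : f q1 + f q2 ≤ ∑ x ∈ s, f x := by
  have h2' : q2 ∈ s.erase q1 := Finset.mem_erase.mpr ⟨fun h => hne h.symm, h2⟩
  calc f q1 + f q2
      ≤ f q1 + ∑ x ∈ s.erase q1, f x :=
        Nat.add_le_add_left (Finset.single_le_sum (fun _ _ => Nat.zero_le _) h2') _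
    _ = ∑ x ∈ s, f x := Finset.add_sum_erase s f h1

lemma cyc_sum_bound {V : Type*} [DecidableEq V] [Fintype V] (X : Finset V)
    {N : ℕ} [NeZero N] (g : Fin N → V) (hg : Function.Injective g)
    (ind : V → V → ℕ) (hind : ∀ l : Fin N, 1 ≤ ind (g l) (g (l + 1)))
    {a b : Fin N} (hab : ¬((g a ∈ X) ↔ (g b ∈ X))) :
    2 ≤ ∑ q ∈ X ×ˢ Xᶜ, (ind q.1 q.2 + ind q.2 q.1) := by
  classical
  set z : Fin N → Bool := fun l => decide (g l ∈ X) with hz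
  have hzab : z a ≠ z b := by
    simp only [hz, ne_eq, decide_eq_decide]
    exact hab
  obtain ⟨l1, hl1⟩ : ∃ l, z l ≠ z (l + 1) := by
    by_contra h
    push_neg at h
    exact hzab (cyc_const z h a b)
  obtain ⟨l2, hl21, hl2⟩ := cyc_two_changes z hl1
  set q : Fin N → V × V :=
    fun l => if g l ∈ X then (g l, g (l + 1)) else (g (l + 1), g l) with hqd
  have hcross : ∀ l : Fin N, z l ≠ z (l + 1) →
      ((g l ∈ X ∧ g (l + 1) ∉ X) ∨ (g l ∉ X ∧ g (l + 1) ∈ X)) := by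
    intro l h
    by_cases hm : g l ∈ X <;> by_cases hm' : g (l + 1) ∈ X
    · exact absurd (by simp [hz, hm, hm']) h
    · exact Or.inl ⟨hm, hm'⟩
    · exact Or.inr ⟨hm, hm'⟩
    · exact absurd (by simp [hz, hm, hm']) h
  have hqmem : ∀ l : Fin N, z l ≠ z (l + 1) → q l ∈ X ×ˢ Xᶜ := by
    intro l h
    rcases hcross l h with ⟨hm, hm'⟩ | ⟨hm, hm'⟩ <;>
      simp [hqd, hm, hm', Finset.mem_product, Finset.mem_compl]
  have hq1 : ∀ l : Fin N, 1 ≤ ind (q l).1 (q l).2 + ind (q l).2 (q l).1 := by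
    intro l
    by_cases hm : g l ∈ X
    · simp only [hqd, if_pos hm]
      exact le_add_right (hind l)
    · simp only [hqd, if_neg hm]
      exact le_add_left (hind l)
  by_cases hqq : q l1 = q l2
  · -- single pair, double weight
    have h2 : 2 ≤ ind (q l1).1 (q l1).2 + ind (q l1).2 (q l1).1 := by
      by_cases hm1 : g l1 ∈ X <;> by_cases hm2 : g l2 ∈ X
      · exfalso
        apply hl21
        apply hg
        have := hqq
        simp only [hqd, if_pos hm1, if_pos hm2, Prod.mk.injEq] at this
        exact this.1.symm
      · -- q l1 = (g l1, g (l1+1)) = (g (l2+1), g l2)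
        have := hqq
        simp only [hqd, if_pos hm1, if_neg hm2, Prod.mk.injEq] at this
        obtain ⟨e1, e2⟩ := this
        simp only [hqd, if_pos hm1]
        have h1' := hind l1
        have h2' := hind l2
        rw [← e1, ← e2] at h2'
        omega
      · have := hqq
        simp only [hqd, if_neg hm1, if_pos hm2, Prod.mk.injEq] at this
        obtain ⟨e1, e2⟩ := this
        simp only [hqd, if_neg hm1]
        have h1' := hind l1
        have h2' := hind l2
        rw [← e1, ← e2] at h2'
        omega
      · exfalso
        apply hl21
        apply hg
        have := hqq
        simp only [hqd, if_neg hm1, if_neg hm2, Prod.mk.injEq] at this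
        exact this.2.symm
    calc (2 : ℕ) ≤ ind (q l1).1 (q l1).2 + ind (q l1).2 (q l1).1 := h2
      _ ≤ ∑ x ∈ X ×ˢ Xᶜ, (ind x.1 x.2 + ind x.2 x.1) :=
        Finset.single_le_sum (f := fun x => ind x.1 x.2 + ind x.2 x.1)
          (fun _ _ => Nat.zero_le _) (hqmem l1 hl1)
  · calc (2 : ℕ) ≤ (ind (q l1).1 (q l1).2 + ind (q l1).2 (q l1).1) +
        (ind (q l2).1 (q l2).2 + ind (q l2).2 (q l2).1) := by
          have := hq1 l1; have := hq1 l2; omega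
      _ ≤ ∑ x ∈ X ×ˢ Xᶜ, (ind x.1 x.2 + ind x.2 x.1) :=
        sum_pair_le (f := fun x => ind x.1 x.2 + ind x.2 x.1)
          (hqmem l1 hl1) (hqmem l2 hl2) hqq

def pI {k : ℕ} (p : Fin k → ℕ) (a b : PartVert k p) : ℕ :=
  if a.1 = b.1 ∧ (b.2.val = a.2.val + 1 ∨ a.2.val = b.2.val + 1) then 1 else 0

def tI {k : ℕ} (p : Fin k → ℕ) (a b : PartVert k p) : ℕ :=
  if a.2.val = 0 ∧ b.2.val = 0 ∧ b.1.val = (a.1.val + 1) % k then 1 else 0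

def bI {k : ℕ} (p : Fin k → ℕ) (a b : PartVert k p) : ℕ :=
  if a.2.val = p a.1 - 1 ∧ b.2.val = p b.1 - 1 ∧ b.1.val = (a.1.val + 1) % k
    then 1 else 0

def cI {k : ℕ} (p : Fin k → ℕ) (a b : PartVert k p) : ℕ :=
  if b.2.val = (a.2.val + 1) % p a.1 then 1 else 0

lemma arcMult_eq_of_ne {k : ℕ} {p : Fin k → ℕ} (hk : k ≠ 1) (a b : PartVert k p) :
    arcMult p a b = pI p a b + tI p a b + bI p a b := by
  rw [arcMult, if_neg hk]; rfl

lemma arcMult_eq_of_one {p : Fin 1 → ℕ} (a b : PartVert 1 p) :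
    arcMult p a b = cI p a b + cI p b a := by
  rw [arcMult, if_pos rfl]; rfl

lemma pv_eq {k : ℕ} {p : Fin k → ℕ} {a b : PartVert k p} (h : a = b) :
    a.1 = b.1 ∧ a.2.val = b.2.val := by subst h; exact ⟨rfl, rfl⟩

lemma path_sum_one {k : ℕ} {p : Fin k → ℕ} (X : Finset (PartVert k p))
    (i : Fin k) (j : ℕ) (hj : j + 1 < p i)
    (hc : ¬((⟨i, ⟨j, by omega⟩⟩ : PartVert k p) ∈ X ↔
            (⟨i, ⟨j + 1, hj⟩⟩ : PartVert k p) ∈ X)) :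
    2 ≤ ∑ q ∈ X ×ˢ Xᶜ, (pI p q.1 q.2 + pI p q.2 q.1) := by
  classical
  set A : PartVert k p := ⟨i, ⟨j, by omega⟩⟩ with hA
  set B : PartVert k p := ⟨i, ⟨j + 1, hj⟩⟩ with hB
  have hAB : pI p A B = 1 := by
    rw [pI, if_pos]; exact ⟨rfl, Or.inl rfl⟩
  have hBA : pI p B A = 1 := by
    rw [pI, if_pos]; exact ⟨rfl, Or.inr rfl⟩
  by_cases hm : A ∈ X
  · have hm' : B ∉ X := fun h => hc ⟨fun _ => h, fun _ => hm⟩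
    have hmem : (A, B) ∈ X ×ˢ Xᶜ := by
      simp [Finset.mem_product, Finset.mem_compl, hm, hm']
    calc (2:ℕ) = pI p A B + pI p B A := by rw [hAB, hBA]
      _ ≤ _ := Finset.single_le_sum (f := fun x => pI p x.1 x.2 + pI p x.2 x.1)
          (fun _ _ => Nat.zero_le _) hmem
  · have hm' : B ∈ X := by
      by_contra hB'
      exact hc ⟨fun h => absurd h hm, fun h => absurd h hB'⟩
    have hmem : (B, A) ∈ X ×ˢ Xᶜ := by
      simp [Finset.mem_product, Finset.mem_compl, hm, hm']
    calc (2:ℕ) = pI p B A + pI p A B := by rw [hAB, hBA]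
      _ ≤ _ := Finset.single_le_sum (f := fun x => pI p x.1 x.2 + pI p x.2 x.1)
          (fun _ _ => Nat.zero_le _) hmem

lemma path_sum_two {k : ℕ} {p : Fin k → ℕ} (X : Finset (PartVert k p))
    (i1 i2 : Fin k) (j1 j2 : ℕ) (hj1 : j1 + 1 < p i1) (hj2 : j2 + 1 < p i2)
    (hdiff : i1 ≠ i2 ∨ j1 ≠ j2)
    (hc1 : ¬((⟨i1, ⟨j1, by omega⟩⟩ : PartVert k p) ∈ X ↔
             (⟨i1, ⟨j1 + 1, hj1⟩⟩ : PartVert k p) ∈ X))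
    (hc2 : ¬((⟨i2, ⟨j2, by omega⟩⟩ : PartVert k p) ∈ X ↔
             (⟨i2, ⟨j2 + 1, hj2⟩⟩ : PartVert k p) ∈ X)) :
    4 ≤ ∑ q ∈ X ×ˢ Xᶜ, (pI p q.1 q.2 + pI p q.2 q.1) := by
  classical
  set A1 : PartVert k p := ⟨i1, ⟨j1, by omega⟩⟩ with hA1
  set B1 : PartVert k p := ⟨i1, ⟨j1 + 1, hj1⟩⟩ with hB1
  set A2 : PartVert k p := ⟨i2, ⟨j2, by omega⟩⟩ with hA2
  set B2 : PartVert k p := ⟨i2, ⟨j2 + 1, hj2⟩⟩ with hB2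
  set q1 : PartVert k p × PartVert k p := if A1 ∈ X then (A1, B1) else (B1, A1) with hq1
  set q2 : PartVert k p × PartVert k p := if A2 ∈ X then (A2, B2) else (B2, A2) with hq2
  have w1 : pI p q1.1 q1.2 + pI p q1.2 q1.1 = 2 := by
    have hAB : pI p A1 B1 = 1 := by rw [pI, if_pos]; exact ⟨rfl, Or.inl rfl⟩
    have hBA : pI p B1 A1 = 1 := by rw [pI, if_pos]; exact ⟨rfl, Or.inr rfl⟩
    by_cases hm : A1 ∈ X <;> simp [hq1, hm, hAB, hBA]
  have w2 : pI p q2.1 q2.2 + pI p q2.2 q2.1 = 2 := by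
    have hAB : pI p A2 B2 = 1 := by rw [pI, if_pos]; exact ⟨rfl, Or.inl rfl⟩
    have hBA : pI p B2 A2 = 1 := by rw [pI, if_pos]; exact ⟨rfl, Or.inr rfl⟩
    by_cases hm : A2 ∈ X <;> simp [hq2, hm, hAB, hBA]
  have hmem1 : q1 ∈ X ×ˢ Xᶜ := by
    by_cases hm : A1 ∈ X
    · have hm' : B1 ∉ X := fun h => hc1 ⟨fun _ => h, fun _ => hm⟩
      simp [hq1, hm, hm', Finset.mem_product, Finset.mem_compl]
    · have hm' : B1 ∈ X := by
        by_contra hB'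
        exact hc1 ⟨fun h => absurd h hm, fun h => absurd h hB'⟩
      simp [hq1, hm, hm', Finset.mem_product, Finset.mem_compl]
  have hmem2 : q2 ∈ X ×ˢ Xᶜ := by
    by_cases hm : A2 ∈ X
    · have hm' : B2 ∉ X := fun h => hc2 ⟨fun _ => h, fun _ => hm⟩
      simp [hq2, hm, hm', Finset.mem_product, Finset.mem_compl]
    · have hm' : B2 ∈ X := by
        by_contra hB'
        exact hc2 ⟨fun h => absurd h hm, fun h => absurd h hB'⟩
      simp [hq2, hm, hm', Finset.mem_product, Finset.mem_compl]
  have hne : q1 ≠ q2 := by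
    intro he
    rw [hq1, hq2] at he
    rcases em (A1 ∈ X) with hm1 | hm1 <;> rcases em (A2 ∈ X) with hm2 | hm2
    · rw [if_pos hm1, if_pos hm2] at he
      have e := pv_eq (congrArg Prod.fst he)
      have e1 : i1 = i2 := e.1
      have e2 : j1 = j2 := e.2
      rcases hdiff with hd | hd
      · exact hd e1
      · exact hd e2
    · rw [if_pos hm1, if_neg hm2] at he
      have e := pv_eq (congrArg Prod.fst he)
      have f := pv_eq (congrArg Prod.snd he)
      have e2 : j1 = j2 + 1 := e.2
      have f2 : j1 + 1 = j2 := f.2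
      omega
    · rw [if_neg hm1, if_pos hm2] at he
      have e := pv_eq (congrArg Prod.fst he)
      have f := pv_eq (congrArg Prod.snd he)
      have e2 : j1 + 1 = j2 := e.2
      have f2 : j1 = j2 + 1 := f.2
      omega
    · rw [if_neg hm1, if_neg hm2] at he
      have e := pv_eq (congrArg Prod.fst he)
      have f := pv_eq (congrArg Prod.snd he)
      have e1 : i1 = i2 := e.1
      have f2 : j1 = j2 := f.2
      rcases hdiff with hd | hd
      · exact hd e1
      · exact hd f2
  calc (4:ℕ) = (pI p q1.1 q1.2 + pI p q1.2 q1.1) + (pI p q2.1 q2.2 + pI p q2.2 q2.1) := by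
        rw [w1, w2]
    _ ≤ _ := sum_pair_le (f := fun x => pI p x.1 x.2 + pI p x.2 x.1) hmem1 hmem2 hne

set_option maxHeartbeats 2000000 in
/-- For every nonempty proper subset `X` of the vertices of `D_η`, at least `4` edges
of the underlying multigraph `G_η` (counted with multiplicity) join `X` to its
complement. -/
theorem Deta_cut_ge_four (n k : ℕ) (hn : 2 ≤ n)
    (hk : 1 ≤ k) (hkn : k ≤ n) (p : Fin k → ℕ)
    (hp : ∀ i, 1 ≤ p i) (hsum : ∑ i, p i = n)
    (X : Finset (PartVert k p)) (hne : X.Nonempty) (hproper : X ≠ Finset.univ) :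
    4 ≤ ∑ a ∈ X, ∑ b ∈ Xᶜ, (arcMult p a b + arcMult p b a) := by
  classical
  have hXc : ∃ v, v ∉ X := by
    by_contra h
    push_neg at h
    exact hproper (Finset.eq_univ_iff_forall.mpr h)
  obtain ⟨vin, hvin⟩ := hne
  obtain ⟨vout, hvout⟩ := hXc
  rw [← Finset.sum_product' X Xᶜ (fun a b => arcMult p a b + arcMult p b a)]
  by_cases hk1 : k = 1
  · -- single cycle case
    subst hk1
    have hp0 : p 0 = n := by simpa using hsum
    haveI : NeZero (p 0) := ⟨by omega⟩
    set g : Fin (p 0) → PartVert 1 p := fun j => ⟨0, j⟩ with hg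
    have hginj : Function.Injective g := by
      intro x y h
      exact Fin.ext (pv_eq h).2
    have hind : ∀ l, 1 ≤ cI p (g l) (g (l + 1)) := by
      intro l
      rw [cI, if_pos]
      show (l + 1).val = (l.val + 1) % p 0
      rw [Fin.add_def, Fin.val_one']
      simp [Nat.add_mod_mod]
    obtain ⟨iv, jv⟩ := vin
    obtain ⟨iw, jw⟩ := vout
    have hiv : iv = 0 := Fin.eq_zero iv
    have hiw : iw = 0 := Fin.eq_zero iw
    subst hiv; subst hiw
    have hab : ¬((g jv ∈ X) ↔ (g jw ∈ X)) := by
      intro h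
      exact hvout (h.mp hvin)
    have main := cyc_sum_bound X g hginj (cI p) hind hab
    have hsplit : ∀ q ∈ X ×ˢ Xᶜ, arcMult p q.1 q.2 + arcMult p q.2 q.1 =
        (cI p q.1 q.2 + cI p q.2 q.1) + (cI p q.1 q.2 + cI p q.2 q.1) := by
      intro q _
      rw [arcMult_eq_of_one, arcMult_eq_of_one]
      ring
    rw [Finset.sum_congr rfl hsplit, Finset.sum_add_distrib]
    omega
  · -- k ≥ 2
    haveI : NeZero k := ⟨by omega⟩
    have hk2 : 2 ≤ k := by omega
    have hsplit : ∀ q ∈ X ×ˢ Xᶜ, arcMult p q.1 q.2 + arcMult p q.2 q.1 =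
        (pI p q.1 q.2 + pI p q.2 q.1) +
        (tI p q.1 q.2 + tI p q.2 q.1) + (bI p q.1 q.2 + bI p q.2 q.1) := by
      intro q _
      rw [arcMult_eq_of_ne hk1, arcMult_eq_of_ne hk1]
      ring
    rw [Finset.sum_congr rfl hsplit, Finset.sum_add_distrib, Finset.sum_add_distrib]
    set gx : Fin k → PartVert k p := fun i => ⟨i, ⟨0, hp i⟩⟩ with hgx
    set gy : Fin k → PartVert k p :=
      fun i => ⟨i, ⟨p i - 1, by have := hp i; omega⟩⟩ with hgy
    have hgxinj : Function.Injective gx := fun x y h => (pv_eq h).1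
    have hgyinj : Function.Injective gy := fun x y h => (pv_eq h).1
    have hmodval : ∀ l : Fin k, (l + 1).val = (l.val + 1) % k := by
      intro l
      rw [Fin.add_def, Fin.val_one']
      simp [Nat.add_mod_mod]
    have hindt : ∀ l, 1 ≤ tI p (gx l) (gx (l + 1)) := by
      intro l
      rw [tI, if_pos]
      exact ⟨rfl, rfl, hmodval l⟩
    have hindb : ∀ l, 1 ≤ bI p (gy l) (gy (l + 1)) := by
      intro l
      rw [bI, if_pos]
      exact ⟨rfl, rfl, hmodval l⟩
    -- generic path change extraction
    have key_path_one : ∀ i : Fin k, ¬((gx i ∈ X) ↔ (gy i ∈ X)) →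
        2 ≤ ∑ q ∈ X ×ˢ Xᶜ, (pI p q.1 q.2 + pI p q.2 q.1) := by
      intro i hcr
      set z : ℕ → Bool := fun j =>
        if h : j < p i then decide ((⟨i, ⟨j, h⟩⟩ : PartVert k p) ∈ X) else false with hz
      have h0 : z 0 = decide (gx i ∈ X) := by
        simp only [hz]; rw [dif_pos (show (0:ℕ) < p i from hp i)]; exact decide_eq_decide.mpr Iff.rfl
      have hL : z (p i - 1) = decide (gy i ∈ X) := by
        simp only [hz]; rw [dif_pos (show p i - 1 < p i by have := hp i; omega)]; exact decide_eq_decide.mpr Iff.rfl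
      have hne0 : z 0 ≠ z (p i - 1) := by
        rw [h0, hL, Ne, decide_eq_decide]
        exact hcr
      obtain ⟨j, hjlt, hchg⟩ := path_one_change z (p i) hne0
      have hcross : ¬((⟨i, ⟨j, by omega⟩⟩ : PartVert k p) ∈ X ↔
          (⟨i, ⟨j + 1, hjlt⟩⟩ : PartVert k p) ∈ X) := by
        rw [← decide_eq_decide]
        have e1 : z j = decide ((⟨i, ⟨j, by omega⟩⟩ : PartVert k p) ∈ X) := by
          simp only [hz]; rw [dif_pos (show j < p i by omega)]
        have e2 : z (j + 1) = decide ((⟨i, ⟨j + 1, hjlt⟩⟩ : PartVert k p) ∈ X) := by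
          simp only [hz]; rw [dif_pos hjlt]
        rw [← e1, ← e2]
        exact hchg
      exact path_sum_one X i j hjlt hcross
    have key_path_two : ∀ v : PartVert k p, ¬((v ∈ X) ↔ (gx v.1 ∈ X)) →
        ((gx v.1 ∈ X) ↔ (gy v.1 ∈ X)) →
        4 ≤ ∑ q ∈ X ×ˢ Xᶜ, (pI p q.1 q.2 + pI p q.2 q.1) := by
      intro v hvx hxyv
      set i : Fin k := v.1 with hi
      set z : ℕ → Bool := fun j =>
        if h : j < p i then decide ((⟨i, ⟨j, h⟩⟩ : PartVert k p) ∈ X) else false with hz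
      have h0 : z 0 = decide (gx i ∈ X) := by
        simp only [hz]; rw [dif_pos (show (0:ℕ) < p i from hp i)]; exact decide_eq_decide.mpr Iff.rfl
      have hL : z (p i - 1) = decide (gy i ∈ X) := by
        simp only [hz]; rw [dif_pos (show p i - 1 < p i by have := hp i; omega)]; exact decide_eq_decide.mpr Iff.rfl
      have hends : z 0 = z (p i - 1) := by
        rw [h0, hL, decide_eq_decide]
        exact hxyv
      have hjlt : v.2.val < p i := v.2.isLt
      have hzv : z v.2.val = decide (v ∈ X) := by
        simp only [hz]; rw [dif_pos hjlt]; exact decide_eq_decide.mpr Iff.rfl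
      have hnev : z v.2.val ≠ z 0 := by
        rw [hzv, h0, Ne, decide_eq_decide]
        exact hvx
      obtain ⟨j1, j2, hj12, hj1lt, hj2lt, hc1, hc2⟩ :=
        path_two_changes z (p i) hends hjlt hnev
      have hcr1 : ¬((⟨i, ⟨j1, by omega⟩⟩ : PartVert k p) ∈ X ↔
          (⟨i, ⟨j1 + 1, hj1lt⟩⟩ : PartVert k p) ∈ X) := by
        rw [← decide_eq_decide]
        have e1 : z j1 = decide ((⟨i, ⟨j1, by omega⟩⟩ : PartVert k p) ∈ X) := by
          simp only [hz]; rw [dif_pos (show j1 < p i by omega)]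
        have e2 : z (j1 + 1) = decide ((⟨i, ⟨j1 + 1, hj1lt⟩⟩ : PartVert k p) ∈ X) := by
          simp only [hz]; rw [dif_pos hj1lt]
        rw [← e1, ← e2]
        exact hc1
      have hcr2 : ¬((⟨i, ⟨j2, by omega⟩⟩ : PartVert k p) ∈ X ↔
          (⟨i, ⟨j2 + 1, hj2lt⟩⟩ : PartVert k p) ∈ X) := by
        rw [← decide_eq_decide]
        have e1 : z j2 = decide ((⟨i, ⟨j2, by omega⟩⟩ : PartVert k p) ∈ X) := by
          simp only [hz]; rw [dif_pos (show j2 < p i by omega)]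
        have e2 : z (j2 + 1) = decide ((⟨i, ⟨j2 + 1, hj2lt⟩⟩ : PartVert k p) ∈ X) := by
          simp only [hz]; rw [dif_pos hj2lt]
        rw [← e1, ← e2]
        exact hc2
      exact path_sum_two X i i j1 j2 hj1lt hj2lt (Or.inr (by omega)) hcr1 hcr2
    by_cases hcx : ∀ i : Fin k, (gx i ∈ X) ↔ (gx 0 ∈ X)
    · by_cases hcy : ∀ i : Fin k, (gy i ∈ X) ↔ (gy 0 ∈ X)
      · -- both cycles constant
        by_cases hxy : (gx 0 ∈ X) ↔ (gy 0 ∈ X)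
        · -- same constant value: use interior witness
          by_cases hv : gx 0 ∈ X
          · have h1 : ¬((vout ∈ X) ↔ (gx vout.1 ∈ X)) := by
              have : gx vout.1 ∈ X := (hcx vout.1).mpr hv
              intro h
              exact hvout (h.mpr this)
            have h2 : (gx vout.1 ∈ X) ↔ (gy vout.1 ∈ X) := by
              have := hcx vout.1
              have := hcy vout.1
              tauto
            have := key_path_two vout h1 h2
            omega
          · have h1 : ¬((vin ∈ X) ↔ (gx vin.1 ∈ X)) := by
              have hnx : gx vin.1 ∉ X := fun h => hv ((hcx vin.1).mp h)
              intro h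
              exact hnx (h.mp hvin)
            have h2 : (gx vin.1 ∈ X) ↔ (gy vin.1 ∈ X) := by
              have := hcx vin.1
              have := hcy vin.1
              tauto
            have := key_path_two vin h1 h2
            omega
        · -- constants differ: every path crosses; use paths 0 and 1
          have hall : ∀ i : Fin k, ¬((gx i ∈ X) ↔ (gy i ∈ X)) := by
            intro i h
            have := hcx i
            have := hcy i
            tauto
          have h01 : (0 : Fin k) ≠ 1 := by
            intro h
            have : (0 : Fin k).val = (1 : Fin k).val := by rw [h]
            rw [Fin.val_one'] at this
            simp at this
            omega
          -- extract change positions on paths 0 and 1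
          have hget : ∀ i : Fin k, ¬((gx i ∈ X) ↔ (gy i ∈ X)) →
              ∃ j, ∃ hjlt : j + 1 < p i,
                ¬((⟨i, ⟨j, by omega⟩⟩ : PartVert k p) ∈ X ↔
                  (⟨i, ⟨j + 1, hjlt⟩⟩ : PartVert k p) ∈ X) := by
            intro i hcr
            set z : ℕ → Bool := fun j =>
              if h : j < p i then decide ((⟨i, ⟨j, h⟩⟩ : PartVert k p) ∈ X) else false with hz
            have h0 : z 0 = decide (gx i ∈ X) := by
              simp only [hz]; rw [dif_pos (show (0:ℕ) < p i from hp i)]; exact decide_eq_decide.mpr Iff.rfl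
            have hL : z (p i - 1) = decide (gy i ∈ X) := by
              simp only [hz]; rw [dif_pos (show p i - 1 < p i by have := hp i; omega)]; exact decide_eq_decide.mpr Iff.rfl
            have hne0 : z 0 ≠ z (p i - 1) := by
              rw [h0, hL, Ne, decide_eq_decide]
              exact hcr
            obtain ⟨j, hjlt, hchg⟩ := path_one_change z (p i) hne0
            refine ⟨j, hjlt, ?_⟩
            rw [← decide_eq_decide]
            have e1 : z j = decide ((⟨i, ⟨j, by omega⟩⟩ : PartVert k p) ∈ X) := by
              simp only [hz]; rw [dif_pos (show j < p i by omega)]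
            have e2 : z (j + 1) = decide ((⟨i, ⟨j + 1, hjlt⟩⟩ : PartVert k p) ∈ X) := by
              simp only [hz]; rw [dif_pos hjlt]
            rw [← e1, ← e2]
            exact hchg
          obtain ⟨j1, hj1lt, hcr1⟩ := hget 0 (hall 0)
          obtain ⟨j2, hj2lt, hcr2⟩ := hget 1 (hall 1)
          have := path_sum_two X 0 1 j1 j2 hj1lt hj2lt (Or.inl h01) hcr1 hcr2
          omega
      · -- bottom cycle not constant
        rw [not_forall] at hcy
        obtain ⟨i, hi⟩ := hcy
        have hbot := cyc_sum_bound X gy hgyinj (bI p) hindb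
          (a := i) (b := 0) hi
        have hpath : ∃ i' : Fin k, ¬((gx i' ∈ X) ↔ (gy i' ∈ X)) := by
          by_contra hno
          push_neg at hno
          apply hi
          have h1 := hno i
          have h2 := hno 0
          have h3 := hcx i
          have h4 := hcx 0
          tauto
        obtain ⟨i', hi'⟩ := hpath
        have := key_path_one i' hi'
        omega
    · -- top cycle not constant
      rw [not_forall] at hcx
      obtain ⟨i, hi⟩ := hcx
      have htop := cyc_sum_bound X gx hgxinj (tI p) hindt
        (a := i) (b := 0) hi
      by_cases hcy : ∀ i : Fin k, (gy i ∈ X) ↔ (gy 0 ∈ X)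
      · have hpath : ∃ i' : Fin k, ¬((gx i' ∈ X) ↔ (gy i' ∈ X)) := by
          by_contra hno
          push_neg at hno
          apply hi
          have h1 := hno i
          have h2 := hno 0
          have h3 := hcy i
          have h4 := hcy 0
          tauto
        obtain ⟨i', hi'⟩ := hpath
        have := key_path_one i' hi'
        omega
      · rw [not_forall] at hcy
        obtain ⟨i2, hi2⟩ := hcy
        have hbot := cyc_sum_bound X gy hgyinj (bI p) hindb
          (a := i2) (b := 0) hi2
        omega
end

section
/- Let T be a tree with n ≥ 2 leaves, let η = (p_1, …, p_k) be a k-partition of n, and let ℓ be a bijection from the leaf set ∂(T) of T to the vertex set V(D_η) (an η-labeling). Let 𝒫(T,η,ℓ) be the collection of all directed paths T⃗[u,v], over pairs of leaves u,v of T such that (ℓ(u),ℓ(v)) is an arc of D_η, where T⃗[u,v] denotes the unique path of T between u and v, directed from u to v. Then for every edge e ∈ E(T), at least four directed paths in 𝒫(T,η,ℓ) traverse e. -/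
open scoped Classical

/- ### generic sum lower bounds -/

lemma two_le_sum {α : Type*} [Fintype α] [DecidableEq α] {t : α → ℕ} {x y : α}
    (hxy : x ≠ y) (hx : 1 ≤ t x) (hy : 1 ≤ t y) : 2 ≤ ∑ z, t z := by
  have h1 : ({x, y} : Finset α).sum t ≤ Finset.univ.sum t :=
    Finset.sum_le_sum_of_subset (Finset.subset_univ _)
  rw [Finset.sum_pair hxy] at h1
  calc 2 ≤ t x + t y := by omega
  _ ≤ _ := h1

lemma four_le_sum {α : Type*} [Fintype α] [DecidableEq α] {t : α → ℕ} {x y z w : α}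
    (h1 : x ≠ y) (h2 : x ≠ z) (h3 : x ≠ w) (h4 : y ≠ z) (h5 : y ≠ w) (h6 : z ≠ w)
    (hx : 1 ≤ t x) (hy : 1 ≤ t y) (hz : 1 ≤ t z) (hw : 1 ≤ t w) : 4 ≤ ∑ a, t a := by
  have hs : ({x, y, z, w} : Finset α).sum t ≤ Finset.univ.sum t :=
    Finset.sum_le_sum_of_subset (Finset.subset_univ _)
  rw [Finset.sum_insert (by simp [h1, h2, h3]), Finset.sum_insert (by simp [h4, h5]),
    Finset.sum_insert (by simp [h6]), Finset.sum_singleton] at hs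
  calc 4 ≤ t x + (t y + (t z + t w)) := by omega
  _ ≤ _ := hs

/- ### discrete IVT on ℕ and on cycles -/

lemma bool_change (g : ℕ → Bool) : ∀ (d a : ℕ), g a ≠ g (a + d) →
    ∃ m, a ≤ m ∧ m < a + d ∧ g m ≠ g (m + 1) := by
  intro d
  induction d with
  | zero => intro a h; simp at h
  | succ d ih =>
    intro a h
    by_cases hd : g (a + d) = g (a + d + 1)
    · obtain ⟨m, h1, h2, h3⟩ := ih a (by
        intro hx
        exact h (by rw [show a + (d+1) = a + d + 1 by omega, ← hd, ← hx]))
      exact ⟨m, h1, by omega, h3⟩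
    · exact ⟨a + d, by omega, by omega, hd⟩

lemma mod_ne_mod {x y n : ℕ} (h1 : x < y) (h2 : y < x + n) : x % n ≠ y % n := by
  intro h
  have hn : 0 < n := by omega
  have : n ∣ y - x := (Nat.modEq_iff_dvd' (by omega)).mp h
  have := Nat.le_of_dvd (by omega) this
  omega

lemma mod_succ_mod {n : ℕ} (hn : 2 ≤ n) (m : ℕ) : (m % n + 1) % n = (m + 1) % n := by
  conv_rhs => rw [Nat.add_mod]
  rw [Nat.mod_eq_of_lt (show 1 < n by omega)]

/-- a non-constant boolean function on `Z_n` changes value at two distinct places. -/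
lemma cycle_two_changes {n : ℕ} (hn : 2 ≤ n) (t : ℕ → Bool) {a b : ℕ}
    (ha : a < n) (hb : b < n) (hab : t a ≠ t b) :
    ∃ i j, i < n ∧ j < n ∧ i ≠ j ∧ t i ≠ t ((i + 1) % n) ∧ t j ≠ t ((j + 1) % n) := by
  have key : ∀ a b : ℕ, a < b → b < a + n → a < n → t (a % n) ≠ t (b % n) →
      ∃ i j, i < n ∧ j < n ∧ i ≠ j ∧ t i ≠ t ((i + 1) % n) ∧ t j ≠ t ((j + 1) % n) := by
    intro a b hab1 hab2 han hne
    set h : ℕ → Bool := fun m => t (m % n) with hh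
    have h1 : h a ≠ h b := hne
    have h2 : h b ≠ h (a + n) := by
      simp only [hh]
      rw [Nat.add_mod_right]
      exact fun hx => hne (by rw [hx])
    obtain ⟨m₁, hm1a, hm1b, hm1⟩ := bool_change h (b - a) a (by rw [show a + (b-a) = b by omega]; exact h1)
    obtain ⟨m₂, hm2a, hm2b, hm2⟩ := bool_change h (a + n - b) b (by rw [show b + (a+n-b) = a+n by omega]; exact h2)
    refine ⟨m₁ % n, m₂ % n, Nat.mod_lt _ (by omega), Nat.mod_lt _ (by omega),
      mod_ne_mod (by omega) (by omega), ?_, ?_⟩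
    · rw [mod_succ_mod hn]; exact hm1
    · rw [mod_succ_mod hn]; exact hm2
  rcases lt_trichotomy a b with h | h | h
  · exact key a b h (by omega) ha (by rwa [Nat.mod_eq_of_lt ha, Nat.mod_eq_of_lt hb])
  · exact absurd (h ▸ rfl) hab
  · exact key b a h (by omega) hb (by rw [Nat.mod_eq_of_lt ha, Nat.mod_eq_of_lt hb]; exact hab.symm)

lemma ite_add_zero' {c : Prop} [Decidable c] (x y : ℕ) :
    (if c then x + y else 0) = (if c then x else 0) + (if c then y else 0) := by
  split <;> simp

/- ### the cut lemma -/

lemma pv_ne {k : ℕ} {p : Fin k → ℕ} {i i' : Fin k} {a : Fin (p i)} {b : Fin (p i')}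
    (h : i.val ≠ i'.val ∨ a.val ≠ b.val) : (⟨i, a⟩ : PartVert k p) ≠ ⟨i', b⟩ := by
  intro he
  injection he with h1 h2
  subst h1
  rw [eq_of_heq h2] at h
  simp at h

lemma prod_ne_fst {α β : Type*} {a b : α} {c d : β} (h : a ≠ b) : (a, c) ≠ (b, d) :=
  fun he => h (congrArg Prod.fst he)

lemma prod_ne_snd {α β : Type*} {a b : α} {c d : β} (h : c ≠ d) : (a, c) ≠ (b, d) :=
  fun he => h (congrArg Prod.snd he)

/-- discrete IVT within one path of the partition graph -/
lemma path_change {k : ℕ} {p : Fin k → ℕ} (g : PartVert k p → Bool) (i : Fin k)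
    (j1 j2 : ℕ) (h1 : j1 < p i) (h2 : j2 < p i) (hlt : j1 < j2)
    (hne : g ⟨i, ⟨j1, h1⟩⟩ ≠ g ⟨i, ⟨j2, h2⟩⟩) :
    ∃ m, j1 ≤ m ∧ m < j2 ∧ ∃ hm : m + 1 < p i,
      g ⟨i, ⟨m, by omega⟩⟩ ≠ g ⟨i, ⟨m + 1, hm⟩⟩ := by
  set h : ℕ → Bool := fun m => g ⟨i, ⟨min m (p i - 1), by omega⟩⟩ with hh
  have e1 : h j1 = g ⟨i, ⟨j1, h1⟩⟩ := by
    simp only [hh]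
    congr 1
    exact congrArg _ (Fin.ext (by simp; omega))
  have e2 : h j2 = g ⟨i, ⟨j2, h2⟩⟩ := by
    simp only [hh]
    congr 1
    exact congrArg _ (Fin.ext (by simp; omega))
  obtain ⟨m, hma, hmb, hm⟩ := bool_change h (j2 - j1) j1
    (by rw [show j1 + (j2 - j1) = j2 by omega, e1, e2]; exact hne)
  have hmlt : m + 1 < p i := by omega
  refine ⟨m, hma, by omega, hmlt, ?_⟩
  have f1 : h m = g ⟨i, ⟨m, by omega⟩⟩ := by
    simp only [hh]; congr 1; exact congrArg _ (Fin.ext (by simp; omega))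
  have f2 : h (m + 1) = g ⟨i, ⟨m + 1, hmlt⟩⟩ := by
    simp only [hh]; congr 1; exact congrArg _ (Fin.ext (by simp; omega))
  rw [← f1, ← f2]; exact hm

lemma cut_lemma {k : ℕ} (hk : 2 ≤ k ∨ k = 1) (p : Fin k → ℕ) (hp : ∀ i, 1 ≤ p i)
    (hsum2 : 2 ≤ ∑ i, p i) (g : PartVert k p → Bool) (a₀ b₀ : PartVert k p)
    (hne : g a₀ ≠ g b₀) :
    4 ≤ ∑ z : PartVert k p × PartVert k p,
      (if g z.1 ≠ g z.2 then arcMult p z.1 z.2 else 0) := by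
  rcases hk with hk2 | hk1
  -- ===================== case k ≥ 2 =====================
  · have hk1 : k ≠ 1 := by omega
    have hkpos : 0 < k := by omega
    -- split the sum into the three clauses
    have hsplit : ∀ z : PartVert k p × PartVert k p,
        (if g z.1 ≠ g z.2 then arcMult p z.1 z.2 else 0) =
        (if g z.1 ≠ g z.2 then
          (if z.1.1 = z.2.1 ∧ (z.2.2.val = z.1.2.val + 1 ∨ z.1.2.val = z.2.2.val + 1)
            then 1 else 0) else 0) +
        (if g z.1 ≠ g z.2 then
          (if z.1.2.val = 0 ∧ z.2.2.val = 0 ∧ z.2.1.val = (z.1.1.val + 1) % k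
            then 1 else 0) else 0) +
        (if g z.1 ≠ g z.2 then
          (if z.1.2.val = p z.1.1 - 1 ∧ z.2.2.val = p z.2.1 - 1 ∧
              z.2.1.val = (z.1.1.val + 1) % k then 1 else 0) else 0) := by
      intro z
      simp only [arcMult, if_neg hk1, ite_add_zero']
    rw [Finset.sum_congr rfl (fun z _ => hsplit z), Finset.sum_add_distrib,
      Finset.sum_add_distrib]
    set T1 : PartVert k p × PartVert k p → ℕ := fun z =>
      (if g z.1 ≠ g z.2 then
        (if z.1.1 = z.2.1 ∧ (z.2.2.val = z.1.2.val + 1 ∨ z.1.2.val = z.2.2.val + 1)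
          then 1 else 0) else 0) with hT1
    set T2 : PartVert k p × PartVert k p → ℕ := fun z =>
      (if g z.1 ≠ g z.2 then
        (if z.1.2.val = 0 ∧ z.2.2.val = 0 ∧ z.2.1.val = (z.1.1.val + 1) % k
          then 1 else 0) else 0) with hT2
    set T3 : PartVert k p × PartVert k p → ℕ := fun z =>
      (if g z.1 ≠ g z.2 then
        (if z.1.2.val = p z.1.1 - 1 ∧ z.2.2.val = p z.2.1 - 1 ∧
            z.2.1.val = (z.1.1.val + 1) % k then 1 else 0) else 0) with hT3
    show 4 ≤ (∑ z : PartVert k p × PartVert k p, T1 z) +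
      (∑ z : PartVert k p × PartVert k p, T2 z) + (∑ z : PartVert k p × PartVert k p, T3 z)
    -- the top and bottom vertices
    set tv : Fin k → PartVert k p := fun i => ⟨i, ⟨0, hp i⟩⟩ with htv
    set bv : Fin k → PartVert k p := fun i => ⟨i, ⟨p i - 1, by have := hp i; omega⟩⟩ with hbv
    -- a single crossing path edge gives T1-value 1 on the pair and its swap
    have pathpair : ∀ (i : Fin k) (m : ℕ) (hm : m + 1 < p i),
        g ⟨i, ⟨m, by omega⟩⟩ ≠ g ⟨i, ⟨m + 1, hm⟩⟩ →
        T1 ((⟨i, ⟨m, by omega⟩⟩ : PartVert k p), (⟨i, ⟨m + 1, hm⟩⟩ : PartVert k p)) = 1 ∧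
        T1 ((⟨i, ⟨m + 1, hm⟩⟩ : PartVert k p), (⟨i, ⟨m, by omega⟩⟩ : PartVert k p)) = 1 := by
      intro i m hm hgm
      constructor
      · show (if _ ≠ _ then _ else 0) = 1
        rw [if_pos hgm]
        simp
      · show (if _ ≠ _ then _ else 0) = 1
        rw [if_pos hgm.symm]
        simp
    -- two crossing path edges (possibly in different paths) give `4 ≤ ∑ T1`
    have pathfour : ∀ (i i' : Fin k) (m m' : ℕ) (hm : m + 1 < p i) (hm' : m' + 1 < p i'),
        (i ≠ i' ∨ m < m') →
        g ⟨i, ⟨m, by omega⟩⟩ ≠ g ⟨i, ⟨m + 1, hm⟩⟩ →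
        g ⟨i', ⟨m', by omega⟩⟩ ≠ g ⟨i', ⟨m' + 1, hm'⟩⟩ →
        4 ≤ ∑ z, T1 z := by
      intro i i' m m' hm hm' hsep hg1 hg2
      obtain ⟨e1, e2⟩ := pathpair i m hm hg1
      obtain ⟨e3, e4⟩ := pathpair i' m' hm' hg2
      have hcross : ∀ (a b : ℕ) (ha : a < p i) (hb : b < p i'), (m < m' → a ≠ b) →
          (⟨i, ⟨a, ha⟩⟩ : PartVert k p) ≠ ⟨i', ⟨b, hb⟩⟩ := by
        intro a b ha hb hab
        rcases hsep with h | h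
        · exact pv_ne (Or.inl fun hv => h (Fin.ext hv))
        · exact pv_ne (Or.inr (hab h))
      refine four_le_sum (t := T1)
        (x := ((⟨i, ⟨m, by omega⟩⟩ : PartVert k p), (⟨i, ⟨m + 1, hm⟩⟩ : PartVert k p)))
        (y := ((⟨i, ⟨m + 1, hm⟩⟩ : PartVert k p), (⟨i, ⟨m, by omega⟩⟩ : PartVert k p)))
        (z := ((⟨i', ⟨m', by omega⟩⟩ : PartVert k p), (⟨i', ⟨m' + 1, hm'⟩⟩ : PartVert k p)))
        (w := ((⟨i', ⟨m' + 1, hm'⟩⟩ : PartVert k p), (⟨i', ⟨m', by omega⟩⟩ : PartVert k p)))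
        ?_ ?_ ?_ ?_ ?_ ?_ (by omega) (by omega) (by omega) (by omega)
      · exact prod_ne_fst (pv_ne (Or.inr (show m ≠ m + 1 by omega)))
      · exact prod_ne_fst (hcross m m' (by omega) (by omega) (fun h => by omega))
      · exact prod_ne_fst (hcross m (m'+1) (by omega) (by omega) (fun h => by omega))
      · exact prod_ne_snd (hcross m (m'+1) (by omega) (by omega) (fun h => by omega))
      · exact prod_ne_fst (hcross (m+1) (m'+1) (by omega) (by omega) (fun h => by omega))
      · exact prod_ne_fst (pv_ne (Or.inr (show m' ≠ m' + 1 by omega)))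
    -- one crossing path edge gives `2 ≤ ∑ T1`
    have pathtwo : ∀ (i : Fin k) (m : ℕ) (hm : m + 1 < p i),
        g ⟨i, ⟨m, by omega⟩⟩ ≠ g ⟨i, ⟨m + 1, hm⟩⟩ → 2 ≤ ∑ z, T1 z := by
      intro i m hm hgm
      obtain ⟨e1, e2⟩ := pathpair i m hm hgm
      refine two_le_sum (t := T1)
        (x := ((⟨i, ⟨m, by omega⟩⟩ : PartVert k p), (⟨i, ⟨m + 1, hm⟩⟩ : PartVert k p)))
        (y := ((⟨i, ⟨m + 1, hm⟩⟩ : PartVert k p), (⟨i, ⟨m, by omega⟩⟩ : PartVert k p)))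
        (prod_ne_fst (pv_ne (Or.inr (show m ≠ m + 1 by omega)))) (by omega) (by omega)
    -- if the two ends of a path have different colours, the path has a crossing edge
    have ends_edge : ∀ i : Fin k, g (tv i) ≠ g (bv i) →
        ∃ m, ∃ hm : m + 1 < p i, g ⟨i, ⟨m, by omega⟩⟩ ≠ g ⟨i, ⟨m + 1, hm⟩⟩ := by
      intro i hi
      have hlt : 0 < p i - 1 := by
        rcases Nat.eq_zero_or_pos (p i - 1) with h | h
        · exfalso
          apply hi
          simp only [htv, hbv]
          exact congrArg g (congrArg (Sigma.mk i) (Fin.ext (by simp; omega)))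
        · exact h
      have hi' : g ⟨i, ⟨0, hp i⟩⟩ ≠ g ⟨i, ⟨p i - 1, by have := hp i; omega⟩⟩ := hi
      obtain ⟨m, _, hm2, hm3, hgm⟩ := path_change g i 0 (p i - 1) (hp i)
        (by have := hp i; omega) hlt hi'
      exact ⟨m, by omega, hgm⟩
    -- crossing of the top cycle gives `2 ≤ ∑ T2`
    have cyctop : (∃ i j : Fin k, g (tv i) ≠ g (tv j)) → 2 ≤ ∑ z, T2 z := by
      rintro ⟨i, j, hij⟩
      set tb : ℕ → Bool := fun m => g (tv ⟨m % k, Nat.mod_lt _ hkpos⟩) with htb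
      have hconv : ∀ (m : ℕ) (hm : m < k), tb m = g (tv ⟨m, hm⟩) := by
        intro m hm
        simp only [htb]
        exact congrArg g (congrArg tv (Fin.ext (Nat.mod_eq_of_lt hm)))
      have hvconv : ∀ i : Fin k, tb i.val = g (tv i) := by
        intro i
        rw [hconv i.val i.isLt]
      obtain ⟨i1, j1, hi1, hj1, hne1, hc1, hc2⟩ := cycle_two_changes hk2 tb i.isLt j.isLt
        (by rw [hvconv i, hvconv j]; exact hij)
      have hval : ∀ (m : ℕ) (hm : m < k) (hm2 : (m+1) % k < k),
          tb m ≠ tb ((m + 1) % k) →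
          T2 (tv ⟨m, hm⟩, tv ⟨(m + 1) % k, hm2⟩) = 1 := by
        intro m hm hm2 hc
        have hcr : g (tv ⟨m, hm⟩) ≠ g (tv ⟨(m + 1) % k, hm2⟩) := by
          rw [← hconv m hm, ← hconv _ hm2]; exact hc
        show (if _ ≠ _ then _ else 0) = 1
        rw [if_pos hcr]
        exact if_pos ⟨rfl, rfl, rfl⟩
      refine two_le_sum (t := T2)
        (x := (tv ⟨i1, hi1⟩, tv ⟨(i1 + 1) % k, Nat.mod_lt _ hkpos⟩))
        (y := (tv ⟨j1, hj1⟩, tv ⟨(j1 + 1) % k, Nat.mod_lt _ hkpos⟩))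
        ?_ (by rw [hval i1 hi1 _ hc1]) (by rw [hval j1 hj1 _ hc2])
      refine prod_ne_fst ?_
      simp only [htv]
      exact pv_ne (Or.inl (show i1 ≠ j1 from hne1))
    -- crossing of the bottom cycle gives `2 ≤ ∑ T3`
    have cycbot : (∃ i j : Fin k, g (bv i) ≠ g (bv j)) → 2 ≤ ∑ z, T3 z := by
      rintro ⟨i, j, hij⟩
      set bb : ℕ → Bool := fun m => g (bv ⟨m % k, Nat.mod_lt _ hkpos⟩) with hbb
      have hconv : ∀ (m : ℕ) (hm : m < k), bb m = g (bv ⟨m, hm⟩) := by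
        intro m hm
        simp only [hbb]
        exact congrArg g (congrArg bv (Fin.ext (Nat.mod_eq_of_lt hm)))
      have hvconv : ∀ i : Fin k, bb i.val = g (bv i) := by
        intro i
        rw [hconv i.val i.isLt]
      obtain ⟨i1, j1, hi1, hj1, hne1, hc1, hc2⟩ := cycle_two_changes hk2 bb i.isLt j.isLt
        (by rw [hvconv i, hvconv j]; exact hij)
      have hval : ∀ (m : ℕ) (hm : m < k) (hm2 : (m+1) % k < k),
          bb m ≠ bb ((m + 1) % k) →
          T3 (bv ⟨m, hm⟩, bv ⟨(m + 1) % k, hm2⟩) = 1 := by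
        intro m hm hm2 hc
        have hcr : g (bv ⟨m, hm⟩) ≠ g (bv ⟨(m + 1) % k, hm2⟩) := by
          rw [← hconv m hm, ← hconv _ hm2]; exact hc
        show (if _ ≠ _ then _ else 0) = 1
        rw [if_pos hcr]
        exact if_pos ⟨rfl, rfl, rfl⟩
      refine two_le_sum (t := T3)
        (x := (bv ⟨i1, hi1⟩, bv ⟨(i1 + 1) % k, Nat.mod_lt _ hkpos⟩))
        (y := (bv ⟨j1, hj1⟩, bv ⟨(j1 + 1) % k, Nat.mod_lt _ hkpos⟩))
        ?_ (by rw [hval i1 hi1 _ hc1]) (by rw [hval j1 hj1 _ hc2])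
      refine prod_ne_fst ?_
      simp only [hbv]
      exact pv_ne (Or.inl (show i1 ≠ j1 from hne1))
    -- now the case analysis
    by_cases hTnc : ∃ i j : Fin k, g (tv i) ≠ g (tv j) <;>
      by_cases hBnc : ∃ i j : Fin k, g (bv i) ≠ g (bv j)
    · -- both cycles cross
      have h2 := cyctop hTnc
      have h3 := cycbot hBnc
      omega
    · -- top crosses, bottom constant
      push_neg at hBnc
      have h2 := cyctop hTnc
      obtain ⟨i, j, hij⟩ := hTnc
      have hdiff : g (tv i) ≠ g (bv i) ∨ g (tv j) ≠ g (bv j) := by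
        by_contra h
        push_neg at h
        exact hij (h.1.trans ((hBnc i j).trans h.2.symm))
      have h1 : 2 ≤ ∑ z, T1 z := by
        rcases hdiff with h | h
        · obtain ⟨m, hm, hgm⟩ := ends_edge i h
          exact pathtwo i m hm hgm
        · obtain ⟨m, hm, hgm⟩ := ends_edge j h
          exact pathtwo j m hm hgm
      omega
    · -- bottom crosses, top constant
      push_neg at hTnc
      have h3 := cycbot hBnc
      obtain ⟨i, j, hij⟩ := hBnc
      have hdiff : g (tv i) ≠ g (bv i) ∨ g (tv j) ≠ g (bv j) := by
        by_contra h
        push_neg at h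
        exact hij (h.1.symm.trans ((hTnc i j).trans h.2))
      have h1 : 2 ≤ ∑ z, T1 z := by
        rcases hdiff with h | h
        · obtain ⟨m, hm, hgm⟩ := ends_edge i h
          exact pathtwo i m hm hgm
        · obtain ⟨m, hm, hgm⟩ := ends_edge j h
          exact pathtwo j m hm hgm
      omega
    · -- both cycles constant
      push_neg at hTnc
      push_neg at hBnc
      have h1 : 4 ≤ ∑ z, T1 z := by
        by_cases hcc : g (tv ⟨0, hkpos⟩) = g (bv ⟨0, hkpos⟩)
        · -- top colour = bottom colour; some interior vertex has the other colour
          have hcv : ∀ c : PartVert k p, g c ≠ g (tv ⟨0, hkpos⟩) → 4 ≤ ∑ z, T1 z := by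
            rintro ⟨i, j⟩ hc
            have h0 : g (tv i) ≠ g (⟨i, j⟩ : PartVert k p) := by
              rw [hTnc i ⟨0, hkpos⟩]
              exact fun h => hc h.symm
            have hbnd : g (⟨i, j⟩ : PartVert k p) ≠ g (bv i) := by
              rw [hBnc i ⟨0, hkpos⟩, ← hcc]
              exact hc
            have hj0 : 0 < j.val := by
              rcases Nat.eq_zero_or_pos j.val with h | h
              · exfalso
                apply h0
                simp only [htv]
                exact congrArg g (congrArg (Sigma.mk i) (Fin.ext (by simp [h])))
              · exact h
            have hjtop : j.val < p i - 1 := by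
              rcases Nat.lt_or_ge j.val (p i - 1) with h | h
              · exact h
              · exfalso
                apply hbnd
                simp only [hbv]
                refine congrArg g (congrArg (Sigma.mk i) (Fin.ext ?_))
                have := j.isLt
                simp
                omega
            have h0' : g ⟨i, ⟨0, hp i⟩⟩ ≠ g ⟨i, ⟨j.val, j.isLt⟩⟩ := by
              have : (⟨j.val, j.isLt⟩ : Fin (p i)) = j := Fin.ext rfl
              rw [this]
              exact h0
            have hb' : g ⟨i, ⟨j.val, j.isLt⟩⟩ ≠ g ⟨i, ⟨p i - 1, by have := hp i; omega⟩⟩ := by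
              have : (⟨j.val, j.isLt⟩ : Fin (p i)) = j := Fin.ext rfl
              rw [this]
              exact hbnd
            obtain ⟨m1, _, hm1b, hm1c, hgm1⟩ := path_change g i 0 j.val (hp i) j.isLt hj0 h0'
            obtain ⟨m2, hm2a, hm2b, hm2c, hgm2⟩ := path_change g i j.val (p i - 1) j.isLt
              (by have := hp i; omega) (by omega) hb'
            exact pathfour i i m1 m2 (by omega) hm2c (Or.inr (by omega)) hgm1 hgm2
          by_cases ha : g a₀ = g (tv ⟨0, hkpos⟩)
          · exact hcv b₀ (fun h => hne (ha.trans h.symm))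
          · exact hcv a₀ ha
        · -- top colour ≠ bottom colour : every path crosses
          have hd : ∀ i : Fin k, g (tv i) ≠ g (bv i) := by
            intro i
            rw [hTnc i ⟨0, hkpos⟩, hBnc i ⟨0, hkpos⟩]
            exact hcc
          obtain ⟨m1, hm1, hgm1⟩ := ends_edge ⟨0, hkpos⟩ (hd _)
          obtain ⟨m2, hm2, hgm2⟩ := ends_edge ⟨1, by omega⟩ (hd _)
          exact pathfour _ _ m1 m2 hm1 hm2
            (Or.inl (fun h => by simpa using congrArg Fin.val h)) hgm1 hgm2
      omega

  -- ===================== case k = 1 =====================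
  · subst hk1
    have hn2 : 2 ≤ p 0 := by rwa [Fin.sum_univ_one] at hsum2
    have hsplit : ∀ z : PartVert 1 p × PartVert 1 p,
        (if g z.1 ≠ g z.2 then arcMult p z.1 z.2 else 0) =
        (if g z.1 ≠ g z.2 then
          (if z.2.2.val = (z.1.2.val + 1) % p z.1.1 then 1 else 0) else 0) +
        (if g z.1 ≠ g z.2 then
          (if z.1.2.val = (z.2.2.val + 1) % p z.2.1 then 1 else 0) else 0) := by
      intro z
      simp only [arcMult, ite_add_zero']
      norm_num
      split <;> simp
    rw [Finset.sum_congr rfl (fun z _ => hsplit z), Finset.sum_add_distrib]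
    set T1 : PartVert 1 p × PartVert 1 p → ℕ := fun z =>
      (if g z.1 ≠ g z.2 then
        (if z.2.2.val = (z.1.2.val + 1) % p z.1.1 then 1 else 0) else 0) with hT1
    set T2 : PartVert 1 p × PartVert 1 p → ℕ := fun z =>
      (if g z.1 ≠ g z.2 then
        (if z.1.2.val = (z.2.2.val + 1) % p z.2.1 then 1 else 0) else 0) with hT2
    show 4 ≤ (∑ z : PartVert 1 p × PartVert 1 p, T1 z) +
      (∑ z : PartVert 1 p × PartVert 1 p, T2 z)
    set wv : ∀ m : ℕ, m < p 0 → PartVert 1 p := fun m hm => ⟨0, ⟨m, hm⟩⟩ with hwv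
    set tb : ℕ → Bool := fun m => g (wv (m % p 0) (Nat.mod_lt _ (by omega))) with htb
    have hconv : ∀ (m : ℕ) (hm : m < p 0), tb m = g (wv m hm) := by
      intro m hm
      simp only [htb, hwv]
      exact congrArg g (congrArg (Sigma.mk 0) (Fin.ext (Nat.mod_eq_of_lt hm)))
    obtain ⟨ia, ja⟩ := a₀
    obtain ⟨ib, jb⟩ := b₀
    have hia : ia = 0 := Subsingleton.elim _ _
    have hib : ib = 0 := Subsingleton.elim _ _
    subst hia
    subst hib
    have hja : (⟨0, ⟨ja.val, ja.isLt⟩⟩ : PartVert 1 p) = ⟨0, ja⟩ :=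
      congrArg (Sigma.mk 0) (Fin.ext rfl)
    have hjb : (⟨0, ⟨jb.val, jb.isLt⟩⟩ : PartVert 1 p) = ⟨0, jb⟩ :=
      congrArg (Sigma.mk 0) (Fin.ext rfl)
    have hnz : tb ja.val ≠ tb jb.val := by
      rw [hconv ja.val ja.isLt, hconv jb.val jb.isLt]
      simp only [hwv]
      rw [hja, hjb]
      exact hne
    obtain ⟨i1, j1, hi1, hj1, hne1, hc1, hc2⟩ :=
      cycle_two_changes hn2 tb ja.isLt jb.isLt hnz
    have hcr : ∀ (m : ℕ) (hm : m < p 0) (hm2 : (m + 1) % p 0 < p 0),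
        tb m ≠ tb ((m + 1) % p 0) →
        g (wv m hm) ≠ g (wv ((m + 1) % p 0) hm2) := by
      intro m hm hm2 hc
      rw [← hconv m hm, ← hconv _ hm2]
      exact hc
    have h1 : 2 ≤ ∑ z : PartVert 1 p × PartVert 1 p, T1 z := by
      have hval : ∀ (m : ℕ) (hm : m < p 0) (hm2 : (m + 1) % p 0 < p 0),
          tb m ≠ tb ((m + 1) % p 0) →
          T1 (wv m hm, wv ((m + 1) % p 0) hm2) = 1 := by
        intro m hm hm2 hc
        show (if _ ≠ _ then _ else 0) = 1
        rw [if_pos (hcr m hm hm2 hc)]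
        exact if_pos rfl
      refine two_le_sum (t := T1)
        (x := (wv i1 hi1, wv ((i1 + 1) % p 0) (Nat.mod_lt _ (by omega))))
        (y := (wv j1 hj1, wv ((j1 + 1) % p 0) (Nat.mod_lt _ (by omega))))
        ?_ (by rw [hval i1 hi1 _ hc1]) (by rw [hval j1 hj1 _ hc2])
      refine prod_ne_fst ?_
      simp only [hwv]
      exact pv_ne (Or.inr (show i1 ≠ j1 from hne1))
    have h2 : 2 ≤ ∑ z : PartVert 1 p × PartVert 1 p, T2 z := by
      have hval : ∀ (m : ℕ) (hm : m < p 0) (hm2 : (m + 1) % p 0 < p 0),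
          tb m ≠ tb ((m + 1) % p 0) →
          T2 (wv ((m + 1) % p 0) hm2, wv m hm) = 1 := by
        intro m hm hm2 hc
        show (if _ ≠ _ then _ else 0) = 1
        rw [if_pos (hcr m hm hm2 hc).symm]
        exact if_pos rfl
      refine two_le_sum (t := T2)
        (x := (wv ((i1 + 1) % p 0) (Nat.mod_lt _ (by omega)), wv i1 hi1))
        (y := (wv ((j1 + 1) % p 0) (Nat.mod_lt _ (by omega)), wv j1 hj1))
        ?_ (by rw [hval i1 hi1 _ hc1]) (by rw [hval j1 hj1 _ hc2])
      refine prod_ne_snd ?_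
      simp only [hwv]
      exact pv_ne (Or.inr (show i1 ≠ j1 from hne1))
    omega


/- ### tree lemmas -/

open SimpleGraph in
lemma walk_edge_iff {V : Type*} {T : SimpleGraph V} (hT : T.IsTree) {x y : V}
    (hxy : T.Adj x y) {u v : V} (w : T.Walk u v) (hw : w.IsTrail) :
    (((T \ fromEdgeSet {s(x, y)}).Reachable x u ↔
      (T \ fromEdgeSet {s(x, y)}).Reachable x v) ↔ s(x, y) ∉ w.edges) := by
  have hKY : ¬(T \ fromEdgeSet {s(x, y)}).Reachable x y :=
    (isBridge_iff.mp ((isAcyclic_iff_forall_edge_isBridge.mp hT.IsAcyclic)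
      (T.mem_edgeSet.mpr hxy)))
  induction w with
  | nil => simp
  | @cons a b c h q ih =>
    have hq : q.IsTrail := hw.of_cons
    have hhead : s(a, b) ∉ q.edges := by
      have := hw.edges_nodup
      rw [Walk.edges_cons, List.nodup_cons] at this
      exact this.1
    by_cases hc : s(a, b) = s(x, y)
    · have hqe : s(x, y) ∉ q.edges := hc ▸ hhead
      have h2 : ((T \ fromEdgeSet {s(x, y)}).Reachable x b ↔
          (T \ fromEdgeSet {s(x, y)}).Reachable x c) := (ih hq).mpr hqe
      have h3 : ¬((T \ fromEdgeSet {s(x, y)}).Reachable x a ↔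
          (T \ fromEdgeSet {s(x, y)}).Reachable x b) := by
        rcases Sym2.eq_iff.mp hc with ⟨h1', h2'⟩ | ⟨h1', h2'⟩
        · intro hiff
          rw [h1', h2'] at hiff
          exact hKY (hiff.mp (Reachable.refl x))
        · intro hiff
          rw [h1', h2'] at hiff
          exact hKY (hiff.mpr (Reachable.refl x))
      have hmem : s(x, y) ∈ (Walk.cons h q).edges := by
        rw [Walk.edges_cons, ← hc]
        exact List.mem_cons_self
      constructor
      · intro hiff
        exact absurd (hiff.trans h2.symm) h3
      · intro hnot
        exact absurd hmem hnot
    · have hadj' : (T \ fromEdgeSet {s(x, y)}).Adj a b := by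
        rw [sdiff_adj, fromEdgeSet_adj]
        exact ⟨h, fun hcon => hc (Set.mem_singleton_iff.mp hcon.1)⟩
      have h4 : ((T \ fromEdgeSet {s(x, y)}).Reachable x a ↔
          (T \ fromEdgeSet {s(x, y)}).Reachable x b) :=
        ⟨fun r => r.trans hadj'.reachable, fun r => r.trans hadj'.symm.reachable⟩
      have hmemiff : s(x, y) ∉ (Walk.cons h q).edges ↔ s(x, y) ∉ q.edges := by
        rw [Walk.edges_cons, List.mem_cons]
        have : ¬s(x, y) = s(a, b) := fun e => hc e.symm
        tauto
      rw [hmemiff]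
      exact ⟨fun hiff => (ih hq).mp (h4.symm.trans hiff),
        fun hmem => h4.trans ((ih hq).mpr hmem)⟩

open SimpleGraph in
lemma path_cond_iff {V : Type*} {T : SimpleGraph V} (hT : T.IsTree) {x y : V}
    (hxy : T.Adj x y) (u v : V) :
    (∃ w : T.Walk u v, w.IsPath ∧ s(x, y) ∈ w.edges) ↔
      ¬((T \ fromEdgeSet {s(x, y)}).Reachable x u ↔
        (T \ fromEdgeSet {s(x, y)}).Reachable x v) := by
  constructor
  · rintro ⟨w, hw, hewe⟩ hiff
    exact ((walk_edge_iff hT hxy w hw.isTrail).mp hiff) hewe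
  · intro hniff
    have hr : T.Reachable u v := hT.isConnected.preconnected u v
    refine ⟨(Nonempty.some hr).bypass, Walk.bypass_isPath _, ?_⟩
    by_contra hnot
    exact hniff ((walk_edge_iff hT hxy _ (Walk.bypass_isPath _).isTrail).mpr hnot)

open SimpleGraph in
lemma tree_dist {V : Type*} {T : SimpleGraph V} (hT : T.IsTree) {u v : V}
    (q : T.Walk u v) (hq : q.IsPath) : T.dist u v = q.length := by
  refine le_antisymm (SimpleGraph.dist_le q) ?_
  obtain ⟨w, hw⟩ := (hT.isConnected.preconnected u v).exists_walk_length_eq_dist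
  have huniq := hT.IsAcyclic.path_unique ⟨q, hq⟩ ⟨w.bypass, w.bypass_isPath⟩
  have hq_eq : q = w.bypass := congrArg Subtype.val huniq
  rw [hq_eq]
  calc w.bypass.length ≤ w.length := Walk.length_bypass_le w
  _ = T.dist u v := hw

open SimpleGraph in
lemma exists_leaf_side {V : Type*} [Fintype V] {T : SimpleGraph V} (hT : T.IsTree)
    {x y : V} (hxy : T.Adj x y) :
    ∃ u, (T.neighborSet u).ncard = 1 ∧ (T \ fromEdgeSet {s(x, y)}).Reachable x u := by
  classical
  have hKY : ¬(T \ fromEdgeSet {s(x, y)}).Reachable x y :=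
    (isBridge_iff.mp ((isAcyclic_iff_forall_edge_isBridge.mp hT.IsAcyclic)
      (T.mem_edgeSet.mpr hxy)))
  set S : Finset V := Finset.univ.filter
    (fun u => (T \ fromEdgeSet {s(x, y)}).Reachable x u) with hS
  have hxS : x ∈ S := by
    rw [hS, Finset.mem_filter]
    exact ⟨Finset.mem_univ x, Reachable.refl x⟩
  obtain ⟨u, huS, hmax⟩ := S.exists_max_image (fun u => T.dist y u) ⟨x, hxS⟩
  have hRu : (T \ fromEdgeSet {s(x, y)}).Reachable x u := by
    rw [hS, Finset.mem_filter] at huS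
    exact huS.2
  have huy : u ≠ y := fun h => hKY (h ▸ hRu)
  set q := ((hT.isConnected.preconnected y u).some).bypass with hqdef
  have hqp : q.IsPath := Walk.bypass_isPath _
  obtain ⟨z, hz, r, hqr⟩ := Walk.exists_eq_cons_of_ne huy q.reverse
  have hqrev : q.reverse.IsPath := hqp.reverse
  rw [hqr] at hqrev
  have hzr := (Walk.cons_isPath_iff hz r).mp hqrev
  have hnb : T.neighborSet u = {z} := by
    apply Set.eq_singleton_iff_unique_mem.mpr
    refine ⟨hz, ?_⟩
    intro w hw
    rw [mem_neighborSet] at hw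
    by_contra hwz
    by_cases hsup : w ∈ q.support
    · have hsup' : w ∈ q.reverse.support := by
        rwa [Walk.support_reverse, List.mem_reverse]
      rw [hqr, Walk.support_cons] at hsup'
      rcases List.mem_cons.mp hsup' with hcase | hcase
      · exact hw.ne hcase.symm
      · have hp1 : (Walk.cons hz (r.takeUntil w hcase)).IsPath := by
          rw [Walk.cons_isPath_iff]
          exact ⟨hzr.1.takeUntil hcase,
            fun hcmem => hzr.2 (Walk.support_takeUntil_subset _ hcase hcmem)⟩
        have hp2 : (Walk.cons hw Walk.nil).IsPath := by
          rw [Walk.cons_isPath_iff]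
          simp [hw.ne]
        have huniq := hT.IsAcyclic.path_unique ⟨_, hp1⟩ ⟨_, hp2⟩
        have heq : Walk.cons hz (r.takeUntil w hcase) = Walk.cons hw Walk.nil :=
          congrArg Subtype.val huniq
        injection heq with e1 e2 e3 e4
        exact hwz e2.symm
    · have hq2 : (q.concat hw).IsPath := by
        rw [← Walk.isPath_reverse_iff, Walk.reverse_concat, Walk.cons_isPath_iff]
        refine ⟨hqp.reverse, ?_⟩
        rwa [Walk.support_reverse, List.mem_reverse]
      have hadj' : (T \ fromEdgeSet {s(x, y)}).Adj u w := by
        rw [sdiff_adj, fromEdgeSet_adj]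
        refine ⟨hw, fun hcon => ?_⟩
        rcases Sym2.eq_iff.mp (Set.mem_singleton_iff.mp hcon.1) with ⟨h1, h2⟩ | ⟨h1, h2⟩
        · exact hsup (h2 ▸ q.start_mem_support)
        · exact huy h1
      have hRw : w ∈ S := by
        rw [hS, Finset.mem_filter]
        exact ⟨Finset.mem_univ w, hRu.trans hadj'.reachable⟩
      have hle := hmax w hRw
      rw [tree_dist hT q hqp, tree_dist hT (q.concat hw) hq2, Walk.length_concat] at hle
      omega
  exact ⟨u, by rw [hnb]; exact Set.ncard_singleton z, hRu⟩

open SimpleGraph in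
/-- Let `T` be a tree with `n ≥ 2` leaves, `η` a `k`-partition of `n` and `ℓ` a
bijection from the leaf set of `T` to the vertex set of `D_η`.  Then every edge of `T`
is traversed by at least four directed paths of the family `𝒫(T, η, ℓ)`, consisting of
the directed leaf-to-leaf paths `T⃗[u,v]` over all arcs `(ℓ u, ℓ v)` of `D_η` (counted
with arc multiplicity). -/
theorem tree_dipath_family_covers (V : Type*) [Fintype V]
    (T : SimpleGraph V) (hT : T.IsTree)
    (n k : ℕ) (hn : 2 ≤ n) (hk : 1 ≤ k) (hkn : k ≤ n) (p : Fin k → ℕ)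
    (hp : ∀ i, 1 ≤ p i) (hsum : ∑ i, p i = n)
    (ℓ : V → PartVert k p)
    (hbij : Set.BijOn ℓ {v : V | (T.neighborSet v).ncard = 1} Set.univ) :
    ∀ e ∈ T.edgeSet,
      4 ≤ ∑ u : V, ∑ v : V,
        (if (T.neighborSet u).ncard = 1 ∧ (T.neighborSet v).ncard = 1 ∧
            (∃ w : T.Walk u v, w.IsPath ∧ e ∈ w.edges)
          then arcMult p (ℓ u) (ℓ v) else 0) := by
  intro e
  refine Sym2.ind (fun x y => ?_) e
  intro he
  have hxy : T.Adj x y := T.mem_edgeSet.mp he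
  classical
  have hne : Nonempty V := ⟨x⟩
  set L : Set V := {v : V | (T.neighborSet v).ncard = 1} with hL
  set R : V → Prop := fun u => (T \ fromEdgeSet {s(x, y)}).Reachable x u with hR
  set inv : PartVert k p → V := Function.invFunOn ℓ L with hinv
  have hinvmem : ∀ a, inv a ∈ L ∧ ℓ (inv a) = a := by
    intro a
    obtain ⟨u, hu, hua⟩ := hbij.surjOn (Set.mem_univ a)
    exact ⟨Function.invFunOn_mem ⟨u, hu, hua⟩, Function.invFunOn_eq ⟨u, hu, hua⟩⟩
  have hinvl : ∀ u ∈ L, inv (ℓ u) = u := fun u hu => hbij.injOn.leftInvOn_invFunOn hu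
  set g : PartVert k p → Bool := fun a => if R (inv a) then true else false with hg
  have hgl : ∀ u ∈ L, (g (ℓ u) = true ↔ R u) := by
    intro u hu
    rw [hg]
    simp only [hinvl u hu]
    split
    · simpa
    · simpa
  -- the two leaves on either side of the edge
  have hKY : ¬(T \ fromEdgeSet {s(x, y)}).Reachable x y :=
    (isBridge_iff.mp ((isAcyclic_iff_forall_edge_isBridge.mp hT.IsAcyclic)
      (T.mem_edgeSet.mpr hxy)))
  obtain ⟨uP, hlp, hrp⟩ := exists_leaf_side hT hxy
  obtain ⟨uM, hlm, hrm'⟩ := exists_leaf_side hT hxy.symm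
  have hrm : (T \ fromEdgeSet {s(x, y)}).Reachable y uM := by
    rwa [Sym2.eq_swap] at hrm'
  have hnRm : ¬R uM := fun hr => hKY (hr.trans hrm.symm)
  have hup : uP ∈ L := hlp
  have hum : uM ∈ L := hlm
  have hgp : g (ℓ uP) = true := (hgl uP hup).mpr hrp
  have hgm : g (ℓ uM) = false := by
    rcases Bool.eq_false_or_eq_true (g (ℓ uM)) with h | h
    · exact absurd ((hgl uM hum).mp h) hnRm
    · exact h
  have hgne : g (ℓ uP) ≠ g (ℓ uM) := by rw [hgp, hgm]; simp
  -- reindex the sum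
  have hterm : ∀ u v : V,
      (if (T.neighborSet u).ncard = 1 ∧ (T.neighborSet v).ncard = 1 ∧
          (∃ w : T.Walk u v, w.IsPath ∧ s(x, y) ∈ w.edges)
        then arcMult p (ℓ u) (ℓ v) else 0) =
      (if u ∈ L ∧ v ∈ L ∧ ¬(R u ↔ R v) then arcMult p (ℓ u) (ℓ v) else 0) := by
    intro u v
    refine if_congr ?_ rfl rfl
    exact and_congr Iff.rfl (and_congr Iff.rfl (path_cond_iff hT hxy u v))
  rw [Finset.sum_congr rfl
    (fun u _ => Finset.sum_congr rfl (fun v _ => hterm u v))]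
  rw [← Fintype.sum_prod_type']
  set Lf : Finset V := Finset.univ.filter (fun v => v ∈ L) with hLf
  have hLfm : ∀ v : V, v ∈ Lf ↔ v ∈ L := by
    intro v
    rw [hLf, Finset.mem_filter]
    simp
  have hrestrict : ∑ z ∈ Lf ×ˢ Lf, (if z.1 ∈ L ∧ z.2 ∈ L ∧ ¬(R z.1 ↔ R z.2)
      then arcMult p (ℓ z.1) (ℓ z.2) else 0) =
      ∑ z : V × V, (if z.1 ∈ L ∧ z.2 ∈ L ∧ ¬(R z.1 ↔ R z.2)
      then arcMult p (ℓ z.1) (ℓ z.2) else 0) := by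
    refine Finset.sum_subset (Finset.subset_univ _) ?_
    intro z _ hz
    rw [Finset.mem_product] at hz
    rw [if_neg]
    intro ⟨h1, h2, _⟩
    exact hz ⟨(hLfm z.1).mpr h1, (hLfm z.2).mpr h2⟩
  rw [← hrestrict]
  have hbijsum : ∑ z ∈ Lf ×ˢ Lf, (if z.1 ∈ L ∧ z.2 ∈ L ∧ ¬(R z.1 ↔ R z.2)
      then arcMult p (ℓ z.1) (ℓ z.2) else 0) =
      ∑ z : PartVert k p × PartVert k p,
        (if g z.1 ≠ g z.2 then arcMult p z.1 z.2 else 0) := by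
    refine Finset.sum_nbij' (fun z => (ℓ z.1, ℓ z.2)) (fun z => (inv z.1, inv z.2))
      (fun a _ => Finset.mem_univ _) ?_ ?_ ?_ ?_
    · intro a _
      rw [Finset.mem_product]
      exact ⟨(hLfm _).mpr (hinvmem a.1).1, (hLfm _).mpr (hinvmem a.2).1⟩
    · intro a ha
      rw [Finset.mem_product] at ha
      have h1 := hinvl a.1 ((hLfm _).mp ha.1)
      have h2 := hinvl a.2 ((hLfm _).mp ha.2)
      exact Prod.ext h1 h2
    · intro a _
      exact Prod.ext (hinvmem a.1).2 (hinvmem a.2).2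
    · intro a ha
      rw [Finset.mem_product] at ha
      have h1 := (hLfm _).mp ha.1
      have h2 := (hLfm _).mp ha.2
      refine if_congr ?_ rfl rfl
      constructor
      · rintro ⟨_, _, hriff⟩
        intro hgeq
        apply hriff
        constructor
        · intro hr1
          exact (hgl a.2 h2).mp (by rw [← hgeq]; exact (hgl a.1 h1).mpr hr1)
        · intro hr2
          exact (hgl a.1 h1).mp (by rw [hgeq]; exact (hgl a.2 h2).mpr hr2)
      · intro hgne'
        refine ⟨h1, h2, fun hriff => hgne' ?_⟩
        rcases Bool.eq_false_or_eq_true (g (ℓ a.1)) with hb1 | hb1 <;>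
          rcases Bool.eq_false_or_eq_true (g (ℓ a.2)) with hb2 | hb2
        · rw [hb1, hb2]
        · exact absurd ((hgl a.2 h2).mpr (hriff.mp ((hgl a.1 h1).mp hb1)))
            (by rw [hb2]; simp)
        · exact absurd ((hgl a.1 h1).mpr (hriff.mpr ((hgl a.2 h2).mp hb2)))
            (by rw [hb1]; simp)
        · rw [hb1, hb2]
  rw [hbijsum]
  exact cut_lemma (by omega) p hp (by omega) g (ℓ uP) (ℓ uM) hgne
end
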